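/- arXiv:1511.08558 — 4 statements merged into one kernel-verified Lean document; each statement's English description precedes it below -/
import Mathlib

section
/- If G is a finite solvable group and r, s, t are three distinct primes dividing |G|, then at least one of rs, st, rt is the order of some element of G. -/
open Subgroup

universe u

open Subgroup

section Helpers
variable {G : Type*} [Group G]

lemma my_exists_orderOf_eq_of_dvd [Finite G] {g : G} {d : ℕ} (hd : d ∣ orderOf g)
    (hd0 : 0 < d) : ∃ x : G, orderOf x = d := by
  refine ⟨g ^ (orderOf g / d), ?_⟩
  have h1 : orderOf g ≠ 0 := (orderOf_pos g).ne'
  rw [orderOf_pow, Nat.gcd_eq_right (Nat.div_dvd_of_dvd hd), Nat.div_div_self hd h1]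

lemma my_lift_order {N : Subgroup G} [N.Normal] [Finite G] {d : ℕ} (hd0 : 0 < d)
    (h : ∃ q : G ⧸ N, orderOf q = d) : ∃ g : G, orderOf g = d := by
  obtain ⟨q, hq⟩ := h
  obtain ⟨g, rfl⟩ := QuotientGroup.mk_surjective q
  have hdvd : d ∣ orderOf g := hq ▸ orderOf_map_dvd (QuotientGroup.mk' N) g
  exact my_exists_orderOf_eq_of_dvd hdvd hd0




end Helpers


/-- In a nontrivial finite solvable group there is a nontrivial normal subgroup which is
commutative and of prime exponent. -/
lemma my_ANT (G : Type*) [Group G] [Fintype G] [hsolv : Group.IsSolvable G] [Nontrivial G] :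
    ∃ (p : ℕ) (B : Subgroup G), p.Prime ∧ B.Normal ∧ B ≠ ⊥ ∧ (∀ x ∈ B, x ^ p = 1) ∧
      IsMulCommutative B := by
  classical
  obtain ⟨n, hn⟩ := hsolv.solvable
  -- minimal n with derivedSeries = ⊥
  have hex : ∃ n, derivedSeries G n = ⊥ := ⟨n, hn⟩
  set m := Nat.find hex with hm
  have hmbot : derivedSeries G m = ⊥ := Nat.find_spec hex
  have hm0 : m ≠ 0 := by
    intro h0
    rw [h0] at hmbot
    simp only [derivedSeries_zero] at hmbot
    exact top_ne_bot hmbot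
  set A := derivedSeries G (m - 1) with hA
  have hAne : A ≠ ⊥ := by
    have := Nat.find_min hex (m := m - 1) (by omega)
    simpa [hA] using this
  have hAcomm : ∀ x ∈ A, ∀ y ∈ A, x * y = y * x := by
    have hc : ⁅A, A⁆ = ⊥ := by
      have : derivedSeries G (m - 1 + 1) = ⊥ := by
        rw [show m - 1 + 1 = m by omega]; exact hmbot
      simpa [derivedSeries_succ] using this
    intro x hx y hy
    have := (Subgroup.commutator_eq_bot_iff_le_centralizer.mp hc) hx
    exact (Subgroup.mem_centralizer_iff.mp this y hy).symm
  haveI : A.Normal := derivedSeries_normal G (m - 1)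
  -- pick a prime dividing card A
  have hcard : 1 < Nat.card A := (Subgroup.one_lt_card_iff_ne_bot A).mpr hAne
  set p := (Nat.card A).minFac with hp
  have hpp : p.Prime := Nat.minFac_prime (by omega)
  haveI : Fact p.Prime := ⟨hpp⟩
  -- B = p-torsion of A
  refine ⟨p, { carrier := {x | x ∈ A ∧ x ^ p = 1},
               mul_mem' := ?_, one_mem' := ?_, inv_mem' := ?_ }, hpp, ?_, ?_, ?_, ?_⟩
  · rintro a b ⟨haA, hap⟩ ⟨hbA, hbp⟩
    exact ⟨A.mul_mem haA hbA, by
      rw [Commute.mul_pow (hAcomm a haA b hbA), hap, hbp, one_mul]⟩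
  · exact ⟨A.one_mem, one_pow p⟩
  · rintro a ⟨haA, hap⟩
    exact ⟨A.inv_mem haA, by rw [inv_pow, hap, inv_one]⟩
  · constructor
    rintro x ⟨hxA, hxp⟩ g
    refine ⟨‹A.Normal›.conj_mem x hxA g, ?_⟩
    rw [conj_pow (a := g), hxp]; group
  · -- nontrivial: Cauchy in A
    have hpd : p ∣ Nat.card A := Nat.minFac_dvd _
    haveI : Fintype A := Fintype.ofFinite _
    rw [Nat.card_eq_fintype_card] at hpd
    obtain ⟨a, ha⟩ := exists_prime_orderOf_dvd_card (G := A) p hpd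
    intro hbot
    have haB : (a : G) ∈ ({x | x ∈ A ∧ x ^ p = 1} : Set G) := by
      refine ⟨a.2, ?_⟩
      have : a ^ p = 1 := by rw [← ha]; exact pow_orderOf_eq_one a
      exact_mod_cast congrArg (Subtype.val) this
    have : (a : G) = 1 := by
      rw [SetLike.ext_iff] at hbot
      have := (hbot (a : G)).mp haB
      simpa using this
    have : a = 1 := Subtype.ext this
    rw [this] at ha
    simp at ha
    exact hpp.one_lt.ne' ha.symm
  · rintro x ⟨_, hxp⟩; exact hxp
  · constructor
    constructor
    rintro ⟨x, hxA, _⟩ ⟨y, hyA, _⟩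
    exact Subtype.ext (hAcomm x hxA y hyA)


lemma my_commute_prod_order {G : Type*} [Group G] {x y : G} {p q : ℕ} (hp : p.Prime)
    (hq : q.Prime) (hpq : p ≠ q) (hx : orderOf x = p) (hy : orderOf y = q)
    (hc : Commute x y) : orderOf (x * y) = p * q := by
  have := Commute.orderOf_mul_eq_mul_orderOf_of_coprime hc
    (by rw [hx, hy]; exact (Nat.coprime_primes hp hq).mpr hpq)
  rw [hx, hy] at this; exact this

lemma my_prime_eq_of_dvd_card {H : Type*} [Group H] [Fintype H] {p q : ℕ} (hp : p.Prime)
    (hq : q.Prime) (hexp : ∀ x : H, x ^ p = 1) (hdvd : q ∣ Fintype.card H) : q = p := by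
  haveI : Fact q.Prime := ⟨hq⟩
  obtain ⟨x, hx⟩ := exists_prime_orderOf_dvd_card q hdvd
  have h2 := orderOf_dvd_of_pow_eq_one (hexp x)
  rw [hx] at h2
  exact (Nat.prime_dvd_prime_iff_eq hq hp).mp h2

/-- Structure: a nontrivial subgroup of exponent `a` normalized by an element of order `c`. -/
lemma my_coprime_of_no_common_prime {a b : ℕ}
    (h : ∀ q, q.Prime → q ∣ a → q ∣ b → False) : Nat.Coprime a b := by
  by_contra h1
  obtain ⟨q, hq1, hq2⟩ := Nat.exists_prime_and_dvd h1
  exact h q hq1 (hq2.trans (Nat.gcd_dvd_left a b)) (hq2.trans (Nat.gcd_dvd_right a b))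

def my_Str (G : Type*) [Group G] (a c : ℕ) : Prop :=
  ∃ (M : Subgroup G) (z : G),
    M ≠ ⊥ ∧ (∀ x ∈ M, x ^ a = 1) ∧ orderOf z = c ∧ ∀ x ∈ M, z * x * z⁻¹ ∈ M

lemma my_Str_map {G H : Type*} [Group G] [Group H] (f : G →* H) (hf : Function.Injective f)
    {a c : ℕ} (h : my_Str G a c) : my_Str H a c := by
  obtain ⟨M, z, hM, hexp, hz, hnorm⟩ := h
  refine ⟨M.map f, f z, ?_, ?_, ?_, ?_⟩
  · obtain ⟨x, hx1⟩ := (Subgroup.ne_bot_iff_exists_ne_one.mp hM)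
    intro hbot
    have hmem : f ↑x ∈ M.map f := ⟨↑x, x.2, rfl⟩
    rw [hbot, Subgroup.mem_bot] at hmem
    have : (↑x : G) = 1 := hf (by simpa using hmem)
    exact hx1 (Subtype.ext this)
  · rintro y ⟨x, hx, rfl⟩; rw [← map_pow, hexp x hx, map_one]
  · rw [orderOf_injective f hf, hz]
  · rintro y ⟨x, hx, rfl⟩
    exact ⟨z * x * z⁻¹, hnorm x hx, by simp only [map_mul, map_inv]⟩

open scoped IsMulCommutative in
lemma my_comp {G : Type*} [Group G] [Fintype G] {r a c : ℕ}
    (hr : r.Prime) (ha : a.Prime) (hc : c.Prime) (hra : r ≠ a) (hrc : r ≠ c) (hac : a ≠ c)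
    (B : Subgroup G) [hBn : B.Normal] [hBc : IsMulCommutative B]
    (hBbot : B ≠ ⊥) (hBexp : ∀ x ∈ B, x ^ r = 1)
    (hstr : my_Str G a c) :
    (∃ g : G, orderOf g = r * a) ∨ (∃ g : G, orderOf g = r * c) ∨
      (∃ g : G, orderOf g = a * c) := by
  classical
  haveI : Fact r.Prime := ⟨hr⟩
  haveI : Fact a.Prime := ⟨ha⟩
  haveI : Fact c.Prime := ⟨hc⟩
  by_contra hcon
  push_neg at hcon
  obtain ⟨hra', hrc', hac'⟩ := hcon
  obtain ⟨M, z, hM, hMexp, hz, hnorm⟩ := hstr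
  haveI : Fintype M := Fintype.ofFinite _
  have hordB : ∀ v : G, v ∈ B → v ≠ 1 → orderOf v = r := fun v hv hv1 =>
    orderOf_eq_prime (hBexp v hv) hv1
  have noC_a : ∀ x : G, orderOf x = a → ∀ v ∈ B, x * v = v * x → v = 1 := by
    intro x hx v hv hcomm
    by_contra hv1
    exact hra' (v * x)
      (my_commute_prod_order hr ha hra (hordB v hv hv1) hx (Commute.symm hcomm))
  have noC_c : ∀ x : G, orderOf x = c → ∀ v ∈ B, x * v = v * x → v = 1 := by
    intro x hx v hv hcomm
    by_contra hv1
    exact hrc' (v * x)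
      (my_commute_prod_order hr hc hrc (hordB v hv hv1) hx (Commute.symm hcomm))
  have noC_ac : ∀ x : G, orderOf x = c → ∀ m ∈ M, x * m = m * x → m = 1 := by
    intro x hx m hm hcomm
    by_contra hm1
    exact hac' (m * x)
      (my_commute_prod_order ha hc hac (orderOf_eq_prime (hMexp m hm) hm1) hx
        (Commute.symm hcomm))
  let conjB : G → (B →* B) := fun g =>
    { toFun := fun v => ⟨g * ↑v * g⁻¹, hBn.conj_mem _ v.2 g⟩
      map_one' := by ext; simp
      map_mul' := fun v w => by ext; push_cast; group }
  have conjB_coe : ∀ g (v : B), ((conjB g v : B) : G) = g * ↑v * g⁻¹ := fun _ _ => rfl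
  have conjB_mul : ∀ g h (v : B), conjB (g * h) v = conjB g (conjB h v) := by
    intro g h v; ext; simp only [conjB_coe]; group
  have conjB_one : ∀ v : B, conjB 1 v = v := by
    intro v; ext; simp only [conjB_coe]; group
  have fixB_a : ∀ x : G, orderOf x = a → ∀ v : B, conjB x v = v → v = 1 := by
    intro x hx v hfix
    have h1 : x * ↑v * x⁻¹ = ↑v := congrArg Subtype.val hfix
    have h2 : x * ↑v = ↑v * x := by
      have := congrArg (· * x) h1; simpa [mul_assoc] using this
    exact Subtype.ext (noC_a x hx ↑v v.2 h2)
  have fixB_c : ∀ x : G, orderOf x = c → ∀ v : B, conjB x v = v → v = 1 := by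
    intro x hx v hfix
    have h1 : x * ↑v * x⁻¹ = ↑v := congrArg Subtype.val hfix
    have h2 : x * ↑v = ↑v * x := by
      have := congrArg (· * x) h1; simpa [mul_assoc] using this
    exact Subtype.ext (noC_c x hx ↑v v.2 h2)
  haveI : NeZero c := ⟨hc.ne_zero⟩
  haveI : Fact (1 < c) := ⟨hc.one_lt⟩
  have hzpow_ord : ∀ i : ZMod c, i ≠ 0 → orderOf (z ^ i.val) = c := by
    intro i hi
    rw [orderOf_pow, hz, Nat.Coprime.gcd_eq_one, Nat.div_one]
    refine (Nat.Prime.coprime_iff_not_dvd hc).mpr (Nat.not_dvd_of_pos_of_lt ?_ ?_)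
    · exact Nat.pos_of_ne_zero fun h0 => hi ((ZMod.val_eq_zero i).mp h0)
    · exact ZMod.val_lt i
  have Wc : ∀ v : B, (∏ i : ZMod c, conjB (z ^ (i : ZMod c).val) v) = 1 := by
    intro v
    set F : ZMod c → B := fun i => conjB (z ^ i.val) v with hF
    have hshift : ∀ i : ZMod c, conjB z (F i) = F (i + 1) := by
      intro i
      have h1 : conjB z (F i) = conjB (z * z ^ i.val) v := by rw [hF]; rw [conjB_mul]
      have h2 : z * z ^ i.val = z ^ ((i + 1 : ZMod c).val) := by
        rw [ZMod.val_add, ZMod.val_one]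
        generalize i.val = k
        rw [← hz, pow_mod_orderOf, pow_succ']
      rw [h1, h2]
    have hfix : conjB z (∏ i : ZMod c, F i) = ∏ i : ZMod c, F i := by
      rw [map_prod]
      calc (∏ i : ZMod c, conjB z (F i)) = ∏ i : ZMod c, F (i + 1) :=
            Finset.prod_congr rfl fun i _ => hshift i
        _ = ∏ i : ZMod c, F i := Equiv.prod_comp (Equiv.addRight (1 : ZMod c)) F
    exact fixB_c z hz _ hfix
  have PM : ∀ v : B, (∏ m : M, conjB (↑m) v) = 1 := by
    intro v
    obtain ⟨m₀, hm₀1⟩ := Subgroup.ne_bot_iff_exists_ne_one.mp hM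
    have hm₀a : orderOf (↑m₀ : G) = a :=
      orderOf_eq_prime (hMexp ↑m₀ m₀.2) (by simpa using hm₀1)
    set F : M → B := fun m => conjB (↑m) v with hF
    have hfix : conjB ↑m₀ (∏ m : M, F m) = ∏ m : M, F m := by
      rw [map_prod]
      calc (∏ m : M, conjB ↑m₀ (F m)) = ∏ m : M, F (m₀ * m) := by
            refine Finset.prod_congr rfl fun m _ => ?_
            rw [hF]; simp only; rw [← conjB_mul]; rfl
        _ = ∏ m : M, F m := Equiv.prod_comp (Equiv.mulLeft m₀) F
    exact fixB_a ↑m₀ hm₀a _ hfix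
  obtain ⟨bb, hb1⟩ := Subgroup.ne_bot_iff_exists_ne_one.mp hBbot
  have hnormpow : ∀ (k : ℕ), ∀ x ∈ M, z ^ k * x * (z ^ k)⁻¹ ∈ M := by
    intro k
    induction k with
    | zero => intro x hx; simpa using hx
    | succ n ih =>
      intro x hx
      have e : z ^ (n + 1) * x * (z ^ (n + 1))⁻¹ = z * (z ^ n * x * (z ^ n)⁻¹) * z⁻¹ := by
        group
      rw [e]; exact hnorm _ (ih x hx)
  let ν : ℕ → (M →* M) := fun k =>
    { toFun := fun m => ⟨z ^ k * ↑m * (z ^ k)⁻¹, hnormpow k _ m.2⟩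
      map_one' := by ext; simp
      map_mul' := fun m1 m2 => by ext; push_cast; group }
  have ν_coe : ∀ k (m : M), ((ν k m : M) : G) = z ^ k * ↑m * (z ^ k)⁻¹ := fun _ _ => rfl
  let τ : M × ZMod c → M × ZMod c := fun p =>
    if p.2 = 0 then p else (p.1 * (ν p.2.val p.1)⁻¹, p.2)
  have hτ2 : ∀ p, (τ p).2 = p.2 := by
    intro p; by_cases h : p.2 = 0 <;> simp [τ, h]
  have hτinj : Function.Injective τ := by
    rintro ⟨m, i⟩ ⟨m', i'⟩ heq
    have hi : i = i' := by
      have h := congrArg Prod.snd heq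
      rw [hτ2, hτ2] at h
      simpa using h
    subst hi
    by_cases h1 : i = 0
    · simpa [τ, h1] using heq
    · simp only [τ, h1, if_false, Prod.mk.injEq] at heq
      obtain ⟨heq1, -⟩ := heq
      have h3 := congrArg (fun x => m'⁻¹ * x * (ν i.val m)) heq1
      simp only [mul_assoc, inv_mul_cancel, mul_one, inv_mul_cancel_left] at h3
      -- h3 : m'⁻¹ * m = (ν i.val m')⁻¹ * ν i.val m
      have hw : ν i.val (m'⁻¹ * m) = m'⁻¹ * m := by
        rw [map_mul, map_inv]
        exact h3.symm
      have hwcoe : z ^ i.val * ((m'⁻¹ * m : M) : G) = ((m'⁻¹ * m : M) : G) * z ^ i.val := by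
        have h4 := congrArg (fun x : M => (x : G)) hw
        simp only [ν_coe] at h4
        calc z ^ i.val * ((m'⁻¹ * m : M) : G)
            = (z ^ i.val * ((m'⁻¹ * m : M) : G) * (z ^ i.val)⁻¹) * z ^ i.val := by group
          _ = ((m'⁻¹ * m : M) : G) * z ^ i.val := by rw [h4]
      have h5 : ((m'⁻¹ * m : M) : G) = 1 :=
        noC_ac (z ^ i.val) (hzpow_ord i h1) _ (m'⁻¹ * m).2 hwcoe
      have h6 : m' = m := inv_mul_eq_one.mp (Subtype.ext (by simpa using h5))
      rw [h6]
  have hτbij : Function.Bijective τ := Finite.injective_iff_bijective.mp hτinj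
  let σ : M × ZMod c ≃ M × ZMod c := Equiv.ofBijective τ hτbij
  set Φ : M × ZMod c → B := fun p => conjB (↑p.1 * z ^ p.2.val) bb with hΦ
  have eval1 : (∏ p : M × ZMod c, Φ p) = 1 := by
    rw [Fintype.prod_prod_type]
    calc (∏ m : M, ∏ i : ZMod c, Φ (m, i))
        = ∏ m : M, conjB (↑m) (∏ i : ZMod c, conjB (z ^ (i : ZMod c).val) bb) := by
          refine Finset.prod_congr rfl fun m _ => ?_
          rw [map_prod]
          exact Finset.prod_congr rfl fun i _ => by simp only [hΦ]; exact conjB_mul _ _ _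
      _ = ∏ m : M, conjB (↑m) 1 := Finset.prod_congr rfl fun m _ => by rw [Wc bb]
      _ = 1 := by simp
  have eval2 : (∏ p : M × ZMod c, Φ p) = bb⁻¹ ^ (Fintype.card M) := by
    rw [← Equiv.prod_comp σ Φ]
    have hστ : ∀ p : M × ZMod c, Φ (σ p) = Φ (τ p) := fun p => rfl
    simp only [hστ]
    rw [Fintype.prod_prod_type]
    have slice : ∀ m : M, (∏ i : ZMod c, Φ (τ (m, i))) = conjB ↑m bb * bb⁻¹ := by
      intro m
      rw [← Finset.mul_prod_erase Finset.univ _ (Finset.mem_univ (0 : ZMod c))]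
      have h0 : Φ (τ (m, 0)) = conjB ↑m bb := by
        have ht : τ (m, 0) = (m, 0) := if_pos rfl
        rw [ht]
        simp only [hΦ]
        norm_num [ZMod.val_zero]
      have hrest : (∏ i ∈ Finset.univ.erase (0 : ZMod c), Φ (τ (m, i))) = bb⁻¹ := by
        have hterm : ∀ i ∈ Finset.univ.erase (0 : ZMod c),
            Φ (τ (m, i)) = conjB ↑m (conjB (z ^ (i : ZMod c).val) (conjB ((↑m : G))⁻¹ bb)) := by
          intro i hi
          have hi0 : i ≠ 0 := (Finset.mem_erase.mp hi).1
          have e : (↑(m * (ν i.val m)⁻¹) : G) * z ^ i.val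
              = ↑m * (z ^ i.val * ((↑m : G))⁻¹) := by
            push_cast [ν_coe]
            group
          simp only [hΦ, τ, if_neg hi0]
          rw [e, conjB_mul, conjB_mul]
        rw [Finset.prod_congr rfl hterm, ← map_prod]
        have hinner : (∏ i ∈ Finset.univ.erase (0 : ZMod c),
            conjB (z ^ (i : ZMod c).val) (conjB ((↑m : G))⁻¹ bb))
            = (conjB ((↑m : G))⁻¹ bb)⁻¹ := by
          have hall := Wc (conjB ((↑m : G))⁻¹ bb)
          rw [← Finset.mul_prod_erase Finset.univ _ (Finset.mem_univ (0 : ZMod c))] at hall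
          have h00 : conjB (z ^ (0 : ZMod c).val) (conjB ((↑m : G))⁻¹ bb)
              = conjB ((↑m : G))⁻¹ bb := by
            norm_num [ZMod.val_zero, conjB_one]
          rw [h00] at hall
          exact eq_inv_of_mul_eq_one_right hall
        rw [hinner, ← map_inv, ← conjB_mul, mul_inv_cancel, conjB_one]
      rw [h0, hrest]
    calc (∏ m : M, ∏ i : ZMod c, Φ (τ (m, i)))
        = ∏ m : M, (conjB ↑m bb * bb⁻¹) := Finset.prod_congr rfl fun m _ => slice m
      _ = (∏ m : M, conjB ↑m bb) * ∏ _m : M, bb⁻¹ := Finset.prod_mul_distrib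
      _ = bb⁻¹ ^ (Fintype.card M) := by rw [PM bb, one_mul, Finset.prod_const, Finset.card_univ]
  have hone : bb⁻¹ ^ (Fintype.card M) = 1 := by rw [← eval2, eval1]
  have hbpow : (↑bb : G) ^ (Fintype.card M) = 1 := by
    have := congrArg (fun x : B => ((x⁻¹ : B) : G)) hone
    simpa using this
  have hdvd : r ∣ Fintype.card M := by
    rw [← hordB ↑bb bb.2 (by simpa using hb1)]
    exact orderOf_dvd_of_pow_eq_one hbpow
  exact hra (my_prime_eq_of_dvd_card ha hr (fun x : M => Subtype.ext (hMexp ↑x x.2)) hdvd)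






lemma my_mem_normalizer {K : Type*} [Group K] [Finite K] {M : Subgroup K} {z : K}
    (h : ∀ x ∈ M, z * x * z⁻¹ ∈ M) : z ∈ Subgroup.normalizer (M : Set K) := by
  rw [Subgroup.mem_normalizer_iff]
  intro x
  constructor
  · exact fun hx => h x hx
  · intro hx
    have hinj : Function.Injective (fun m : M => (⟨z * ↑m * z⁻¹, h ↑m m.2⟩ : M)) := by
      intro m1 m2 hm
      have h1 : z * ↑m1 * z⁻¹ = z * ↑m2 * z⁻¹ := congrArg Subtype.val hm
      exact Subtype.ext (mul_left_cancel (mul_right_cancel h1))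
    obtain ⟨m, hm⟩ := (Finite.injective_iff_surjective.mp hinj) ⟨z * x * z⁻¹, hx⟩
    have h2 : z * ↑m * z⁻¹ = z * x * z⁻¹ := congrArg Subtype.val hm
    have h3 : (↑m : K) = x := mul_left_cancel (mul_right_cancel h2)
    exact h3 ▸ m.2

lemma my_Str_lift {K : Type*} [Group K] [Fintype K] {p a c : ℕ}
    (hp : p.Prime) (ha : a.Prime) (hc : c.Prime) (hpa : p ≠ a) (hpc : p ≠ c)
    (B : Subgroup K) [hBn : B.Normal] (hBexp : ∀ x ∈ B, x ^ p = 1)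
    (h : my_Str (K ⧸ B) a c) : my_Str K a c := by
  classical
  obtain ⟨Mb, zb, hMb, hMbexp, hzb, hnormb⟩ := h
  haveI : Finite (K ⧸ B) := Quotient.finite _
  set L : Subgroup (K ⧸ B) := Mb ⊔ Subgroup.zpowers zb with hL
  have hML : Mb ≤ L := le_sup_left
  have hzL : zb ∈ L := Subgroup.mem_sup_right (Subgroup.mem_zpowers zb)
  have hLnorm : L ≤ Subgroup.normalizer (Mb : Set (K ⧸ B)) := sup_le Subgroup.le_normalizer
    ((Subgroup.zpowers_le).mpr (my_mem_normalizer hnormb))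
  set Mh : Subgroup L := Mb.subgroupOf L with hMh
  haveI : Mh.Normal := by
    constructor
    intro x hx g
    rw [Subgroup.mem_subgroupOf] at hx ⊢
    have := (Subgroup.mem_normalizer_iff.mp (hLnorm g.2) ↑x).mp hx
    simpa using this
  set zh : L := ⟨zb, hzL⟩ with hzh
  set w : L ⧸ Mh := QuotientGroup.mk' Mh zh with hw
  have hgen : ∀ q : L ⧸ Mh, q ∈ Subgroup.zpowers w := by
    intro q
    induction q using QuotientGroup.induction_on with
    | _ x =>
      have hx2 : (↑x : K ⧸ B) ∈ Subgroup.closure ((Mb : Set (K ⧸ B)) ∪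
          (Subgroup.zpowers zb : Set (K ⧸ B))) := by
        rw [← Subgroup.sup_eq_closure]; exact x.2
      have key : ∀ (y : K ⧸ B), y ∈ Subgroup.closure ((Mb : Set (K ⧸ B)) ∪
          (Subgroup.zpowers zb : Set (K ⧸ B))) →
          ∀ hy : y ∈ L, QuotientGroup.mk' Mh (⟨y, hy⟩ : L) ∈ Subgroup.zpowers w := by
        intro y hy
        induction hy using Subgroup.closure_induction with
        | mem u hu =>
          intro hyL
          rcases hu with huM | huZ
          · have hm : (⟨u, hyL⟩ : L) ∈ Mh := by rwa [Subgroup.mem_subgroupOf]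
            have : QuotientGroup.mk' Mh (⟨u, hyL⟩ : L) = 1 :=
              (QuotientGroup.eq_one_iff _).mpr hm
            rw [this]; exact Subgroup.one_mem _
          · obtain ⟨n, hn⟩ := huZ
            have hn' : zb ^ n = u := hn
            have he : (⟨u, hyL⟩ : L) = zh ^ n := by
              apply Subtype.ext
              show u = ((zh ^ n : L) : K ⧸ B)
              rw [← hn']
              push_cast
              rfl
            rw [he, map_zpow]
            exact Subgroup.zpow_mem _ (Subgroup.mem_zpowers w) n
        | one =>
          intro hyL
          have : (⟨(1 : K ⧸ B), hyL⟩ : L) = 1 := rfl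
          rw [this, map_one]; exact Subgroup.one_mem _
        | mul u v hu hv ihu ihv =>
          intro hyL
          have huL : u ∈ L := by rw [hL, Subgroup.sup_eq_closure]; exact hu
          have hvL : v ∈ L := by rw [hL, Subgroup.sup_eq_closure]; exact hv
          have : (⟨u * v, hyL⟩ : L) = ⟨u, huL⟩ * ⟨v, hvL⟩ := rfl
          rw [this, map_mul]
          exact Subgroup.mul_mem _ (ihu huL) (ihv hvL)
        | inv u hu ihu =>
          intro hyL
          have huL : u ∈ L := by rw [hL, Subgroup.sup_eq_closure]; exact hu
          have : (⟨u⁻¹, hyL⟩ : L) = (⟨u, huL⟩ : L)⁻¹ := rfl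
          rw [this, map_inv]
          exact Subgroup.inv_mem _ (ihu huL)
      have := key ↑x hx2 x.2
      simpa using this
  have hcardQ : Nat.card (L ⧸ Mh) ∣ c := by
    have h1 : orderOf w = Nat.card (L ⧸ Mh) := orderOf_eq_card_of_forall_mem_zpowers hgen
    rw [← h1]
    have h2 : orderOf w ∣ orderOf zh := orderOf_map_dvd (QuotientGroup.mk' Mh) zh
    have h3 : orderOf zh = c := by rw [hzh, Subgroup.orderOf_mk, hzb]
    rwa [h3] at h2
  have hcardL : Nat.card L = Nat.card (L ⧸ Mh) * Nat.card Mh :=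
    Subgroup.card_eq_card_quotient_mul_card_subgroup Mh
  have hcardMh : Nat.card Mh = Nat.card Mb :=
    Nat.card_congr (Subgroup.subgroupOfEquivOfLe hML).toEquiv
  have hpL : ¬ p ∣ Nat.card L := by
    intro hdvd
    rw [hcardL] at hdvd
    rcases (Nat.Prime.dvd_mul hp).mp hdvd with h1 | h1
    · exact hpc ((Nat.prime_dvd_prime_iff_eq hp hc).mp (h1.trans hcardQ))
    · rw [hcardMh] at h1
      haveI : Fintype Mb := Fintype.ofFinite _
      rw [Nat.card_eq_fintype_card] at h1
      exact hpa (my_prime_eq_of_dvd_card ha hp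
        (fun x : Mb => Subtype.ext (hMbexp ↑x x.2)) h1)
  set π := QuotientGroup.mk' B with hπ
  set P : Subgroup K := Subgroup.comap π L with hP
  have hBP : B ≤ P := by
    intro b hb
    rw [hP, Subgroup.mem_comap]
    have : π b = 1 := (QuotientGroup.eq_one_iff b).mpr hb
    rw [this]; exact L.one_mem
  set φ : P →* L := MonoidHom.codRestrict (π.domRestrict P) L (fun x => x.2) with hφ
  have hφsurj : Function.Surjective φ := by
    intro l
    obtain ⟨k, hk⟩ := QuotientGroup.mk'_surjective B (↑l : K ⧸ B)
    have hkP : k ∈ P := by rw [hP, Subgroup.mem_comap]; rw [hπ]; rw [hk]; exact l.2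
    exact ⟨⟨k, hkP⟩, Subtype.ext hk⟩
  have hφker : φ.ker = B.subgroupOf P := by
    ext x
    rw [MonoidHom.mem_ker, Subgroup.mem_subgroupOf]
    constructor
    · intro hx
      have : π ↑x = 1 := congrArg Subtype.val hx
      exact (QuotientGroup.eq_one_iff _).mp this
    · intro hx
      apply Subtype.ext
      exact (QuotientGroup.eq_one_iff _).mpr hx
  set Bp : Subgroup P := B.subgroupOf P with hBp
  haveI : Bp.Normal := Subgroup.normal_subgroupOf
  have hQP : Nat.card (P ⧸ Bp) = Nat.card L := by
    have e0 : (P ⧸ Bp) ≃* L :=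
      (QuotientGroup.quotientMulEquivOfEq (hBp.trans hφker.symm)).trans
        (QuotientGroup.quotientKerEquivOfSurjective φ hφsurj)
    exact Nat.card_congr e0.toEquiv
  have hcardP : Nat.card P = Nat.card L * Nat.card Bp := by
    rw [Subgroup.card_eq_card_quotient_mul_card_subgroup Bp, hQP]
  have hcop : Nat.Coprime (Nat.card Bp) Bp.index := by
    have hidx : Bp.index = Nat.card L := by rw [Subgroup.index_eq_card, hQP]
    rw [hidx]
    apply my_coprime_of_no_common_prime
    intro q hq hq1 hq2
    haveI : Fintype Bp := Fintype.ofFinite _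
    rw [Nat.card_eq_fintype_card] at hq1
    have hexp : ∀ x : Bp, x ^ p = 1 := by
      intro x
      apply Subtype.ext
      apply Subtype.ext
      have : ((↑x : P) : K) ∈ B := x.2
      have := hBexp _ this
      push_cast
      exact this
    have : q = p := my_prime_eq_of_dvd_card hp hq hexp hq1
    exact hpL (this ▸ hq2)
  obtain ⟨H, hH⟩ := Subgroup.exists_right_complement'_of_coprime hcop
  set ψ : H →* L := φ.comp H.subtype with hψ
  have hψinj : Function.Injective ψ := by
    intro x y hxy
    have hxy' : φ (↑x : P) = φ (↑y : P) := hxy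
    have h1 : φ (↑x * (↑y)⁻¹) = 1 := by
      rw [map_mul, map_inv, hxy']
      group
    have h2 : (↑x * (↑y)⁻¹ : P) ∈ Bp := by rw [← hφker]; exact h1
    have h3 : (↑x * (↑y)⁻¹ : P) ∈ H := H.mul_mem x.2 (H.inv_mem y.2)
    have h4 : (↑x * (↑y)⁻¹ : P) ∈ Bp ⊓ H := ⟨h2, h3⟩
    rw [(disjoint_iff.mp hH.disjoint)] at h4
    have h5 : (↑x : P) = ↑y := by
      have := Subgroup.mem_bot.mp h4
      exact mul_inv_eq_one.mp this
    exact Subtype.ext h5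
  have hcardH : Nat.card H = Nat.card L := by
    have h1 := hH.card_mul
    rw [hcardP, mul_comm (Nat.card ↥L) (Nat.card Bp)] at h1
    exact Nat.eq_of_mul_eq_mul_left Nat.card_pos h1
  have hψbij : Function.Bijective ψ := by
    haveI : Fintype H := Fintype.ofFinite _
    haveI : Fintype L := Fintype.ofFinite _
    rw [Fintype.bijective_iff_injective_and_card]
    refine ⟨hψinj, ?_⟩
    rw [← Nat.card_eq_fintype_card, ← Nat.card_eq_fintype_card]
    exact hcardH
  set e : H ≃* L := MulEquiv.ofBijective ψ hψbij with he
  have hstrL : my_Str L a c := by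
    refine ⟨Mh, zh, ?_, ?_, ?_, ?_⟩
    · obtain ⟨y, hy1⟩ := Subgroup.ne_bot_iff_exists_ne_one.mp hMb
      rw [Subgroup.ne_bot_iff_exists_ne_one]
      refine ⟨⟨⟨↑y, hML y.2⟩, by rw [Subgroup.mem_subgroupOf]; exact y.2⟩, ?_⟩
      intro hcon
      apply hy1
      apply Subtype.ext
      have := congrArg (fun v : Mh => ((↑v : L) : K ⧸ B)) hcon
      simpa using this
    · intro x hx
      apply Subtype.ext
      rw [Subgroup.mem_subgroupOf] at hx
      have := hMbexp _ hx
      push_cast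
      exact this
    · rw [hzh, Subgroup.orderOf_mk, hzb]
    · intro x hx
      rw [Subgroup.mem_subgroupOf] at hx ⊢
      have := hnormb _ hx
      push_cast
      exact this
  have hstrH : my_Str H a c := my_Str_map e.symm.toMonoidHom e.symm.injective hstrL
  have hstrP : my_Str P a c := my_Str_map H.subtype H.subtype_injective hstrH
  exact my_Str_map P.subtype P.subtype_injective hstrP



lemma my_L2 : ∀ (n : ℕ) (K : Type u) [Group K] [Fintype K] [Group.IsSolvable K],
    Fintype.card K ≤ n → ∀ {s t : ℕ}, s.Prime → t.Prime → s ≠ t →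
    s ∣ Fintype.card K → t ∣ Fintype.card K →
    (∃ g : K, orderOf g = s * t) ∨ my_Str K s t ∨ my_Str K t s := by
  intro n
  induction n with
  | zero =>
    intro K _ _ _ hcard s t hs _ _ _ _
    exact absurd (Nat.le_zero.mp hcard) Fintype.card_ne_zero
  | succ n ih =>
    intro K _ _ _ hcard s t hs ht hst hsd htd
    classical
    haveI : Fact s.Prime := ⟨hs⟩
    haveI : Fact t.Prime := ⟨ht⟩
    haveI : Nontrivial K := by
      rw [← Fintype.one_lt_card_iff_nontrivial]
      calc 1 < s := hs.one_lt
        _ ≤ Fintype.card K := Nat.le_of_dvd Fintype.card_pos hsd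
    obtain ⟨p, B, hp, hBn, hBbot, hBexp, hBcomm⟩ := my_ANT K
    haveI := hBn
    by_cases hps : p = s
    · obtain ⟨z, hz⟩ := exists_prime_orderOf_dvd_card t htd
      exact Or.inr (Or.inl ⟨B, z, hBbot, hps ▸ hBexp, hz,
        fun x hx => hBn.conj_mem x hx z⟩)
    by_cases hpt : p = t
    · obtain ⟨z, hz⟩ := exists_prime_orderOf_dvd_card s hsd
      exact Or.inr (Or.inr ⟨B, z, hBbot, hpt ▸ hBexp, hz,
        fun x hx => hBn.conj_mem x hx z⟩)
    haveI : Fintype (K ⧸ B) := Fintype.ofFinite _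
    have hKq : Fintype.card K = Fintype.card (K ⧸ B) * Fintype.card B := by
      have h0 := Subgroup.card_eq_card_quotient_mul_card_subgroup B
      simpa [Nat.card_eq_fintype_card] using h0
    have hBexp' : ∀ x : B, x ^ p = 1 := fun x => Subtype.ext (hBexp ↑x x.2)
    have hBgt : 1 < Fintype.card B := by
      rw [← Nat.card_eq_fintype_card]
      exact (Subgroup.one_lt_card_iff_ne_bot B).mpr hBbot
    have hlt : Fintype.card (K ⧸ B) < Fintype.card K := by
      rw [hKq]
      have h1 : 0 < Fintype.card (K ⧸ B) := Fintype.card_pos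
      nlinarith
    have hsq : s ∣ Fintype.card (K ⧸ B) := by
      rcases (Nat.Prime.dvd_mul hs).mp (hKq ▸ hsd) with h | h
      · exact h
      · exact absurd (my_prime_eq_of_dvd_card hp hs hBexp' h).symm hps
    have htq : t ∣ Fintype.card (K ⧸ B) := by
      rcases (Nat.Prime.dvd_mul ht).mp (hKq ▸ htd) with h | h
      · exact h
      · exact absurd (my_prime_eq_of_dvd_card hp ht hBexp' h).symm hpt
    have hle : Fintype.card (K ⧸ B) ≤ n := by omega
    rcases ih (K ⧸ B) hle hs ht hst hsq htq with h1 | h2 | h3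
    · exact Or.inl (my_lift_order (Nat.mul_pos hs.pos ht.pos) h1)
    · exact Or.inr (Or.inl (my_Str_lift hp hs ht hps hpt B hBexp h2))
    · exact Or.inr (Or.inr (my_Str_lift hp ht hs hpt hps B hBexp h3))

/-- The core case: `B` nontrivial commutative normal of exponent `r`, with `r` not dividing
the order of the quotient. -/
lemma my_core {G : Type u} [Group G] [Fintype G] [Group.IsSolvable G] {r s t : ℕ}
    (hr : r.Prime) (hs : s.Prime) (ht : t.Prime)
    (hrs : r ≠ s) (hrt : r ≠ t) (hst : s ≠ t)
    (B : Subgroup G) [hBn : B.Normal] (hBc : IsMulCommutative B) (hBbot : B ≠ ⊥)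
    (hBexp : ∀ x ∈ B, x ^ r = 1)
    (hnr : ¬ r ∣ Nat.card (G ⧸ B))
    (hsd : s ∣ Fintype.card G) (htd : t ∣ Fintype.card G) :
    (∃ g : G, orderOf g = r * s) ∨ (∃ g : G, orderOf g = s * t) ∨
      (∃ g : G, orderOf g = r * t) := by
  classical
  haveI := hBc
  haveI : Fintype B := Fintype.ofFinite _
  have hBexp' : ∀ x : B, x ^ r = 1 := fun x => Subtype.ext (hBexp ↑x x.2)
  have hcop : Nat.Coprime (Nat.card B) B.index := by
    rw [Subgroup.index_eq_card]
    apply my_coprime_of_no_common_prime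
    intro q hq h1 h2
    rw [Nat.card_eq_fintype_card] at h1
    have : q = r := my_prime_eq_of_dvd_card hr hq hBexp' h1
    exact hnr (this ▸ h2)
  obtain ⟨Kc, hKc⟩ := Subgroup.exists_right_complement'_of_coprime hcop
  haveI : Fintype Kc := Fintype.ofFinite _
  have hcards : Nat.card B * Nat.card Kc = Nat.card G := hKc.card_mul
  have hsK : s ∣ Fintype.card Kc := by
    have h1 : s ∣ Nat.card B * Nat.card Kc := by
      rw [hcards, Nat.card_eq_fintype_card]; exact hsd
    rcases (Nat.Prime.dvd_mul hs).mp h1 with h | h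
    · rw [Nat.card_eq_fintype_card] at h
      exact absurd (my_prime_eq_of_dvd_card hr hs hBexp' h) hrs.symm
    · rwa [Nat.card_eq_fintype_card] at h
  have htK : t ∣ Fintype.card Kc := by
    have h1 : t ∣ Nat.card B * Nat.card Kc := by
      rw [hcards, Nat.card_eq_fintype_card]; exact htd
    rcases (Nat.Prime.dvd_mul ht).mp h1 with h | h
    · rw [Nat.card_eq_fintype_card] at h
      exact absurd (my_prime_eq_of_dvd_card hr ht hBexp' h) hrt.symm
    · rwa [Nat.card_eq_fintype_card] at h
  rcases my_L2 (Fintype.card Kc) Kc le_rfl hs ht hst hsK htK with h1 | h2 | h3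
  · obtain ⟨g, hg⟩ := h1
    exact Or.inr (Or.inl ⟨↑g, by rw [Subgroup.orderOf_coe]; exact hg⟩)
  · have hstr : my_Str G s t := my_Str_map Kc.subtype Kc.subtype_injective h2
    rcases my_comp hr hs ht hrs hrt hst B hBbot hBexp hstr with h | h | h
    · exact Or.inl h
    · exact Or.inr (Or.inr h)
    · exact Or.inr (Or.inl h)
  · have hstr : my_Str G t s := my_Str_map Kc.subtype Kc.subtype_injective h3
    rcases my_comp hr ht hs hrt hrs (Ne.symm hst) B hBbot hBexp hstr with h | h | h
    · exact Or.inr (Or.inr h)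
    · exact Or.inl h
    · exact Or.inr (Or.inl ⟨h.choose, by rw [h.choose_spec, mul_comm]⟩)


lemma my_main : ∀ (n : ℕ) (G : Type u) [Group G] [Fintype G] [Group.IsSolvable G],
    Fintype.card G ≤ n → ∀ {r s t : ℕ}, r.Prime → s.Prime → t.Prime →
    r ≠ s → s ≠ t → r ≠ t →
    r ∣ Fintype.card G → s ∣ Fintype.card G → t ∣ Fintype.card G →
    (∃ g : G, orderOf g = r * s) ∨ (∃ g : G, orderOf g = s * t) ∨
      (∃ g : G, orderOf g = r * t) := by
  intro n
  induction n with
  | zero =>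
    intro G _ _ _ hcard r s t hr _ _ _ _ _ _ _ _
    exact absurd (Nat.le_zero.mp hcard) Fintype.card_ne_zero
  | succ n ih =>
    intro G _ _ _ hcard r s t hr hs ht hrs hst hrt hrd hsd htd
    classical
    haveI : Nontrivial G := by
      rw [← Fintype.one_lt_card_iff_nontrivial]
      calc 1 < r := hr.one_lt
        _ ≤ _ := Nat.le_of_dvd Fintype.card_pos hrd
    obtain ⟨p, B, hp, hBn, hBbot, hBexp, hBcomm⟩ := my_ANT G
    haveI := hBn
    haveI : Fintype (G ⧸ B) := Fintype.ofFinite _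
    have hKq : Fintype.card G = Fintype.card (G ⧸ B) * Fintype.card B := by
      have h0 := Subgroup.card_eq_card_quotient_mul_card_subgroup B
      simpa [Nat.card_eq_fintype_card] using h0
    have hBexp' : ∀ x : B, x ^ p = 1 := fun x => Subtype.ext (hBexp ↑x x.2)
    by_cases hrq : r ∣ Fintype.card (G ⧸ B)
    · by_cases hsq : s ∣ Fintype.card (G ⧸ B)
      · by_cases htq : t ∣ Fintype.card (G ⧸ B)
        · have hBgt : 1 < Fintype.card B := by
            rw [← Nat.card_eq_fintype_card]
            exact (Subgroup.one_lt_card_iff_ne_bot B).mpr hBbot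
          have hle : Fintype.card (G ⧸ B) ≤ n := by
            have h1 : 0 < Fintype.card (G ⧸ B) := Fintype.card_pos
            nlinarith [hKq, hcard]
          rcases ih (G ⧸ B) hle hr hs ht hrs hst hrt hrq hsq htq with h1 | h1 | h1
          · exact Or.inl (my_lift_order (Nat.mul_pos hr.pos hs.pos) h1)
          · exact Or.inr (Or.inl (my_lift_order (Nat.mul_pos hs.pos ht.pos) h1))
          · exact Or.inr (Or.inr (my_lift_order (Nat.mul_pos hr.pos ht.pos) h1))
        · -- p = t
          have hpt : p = t := by
            rcases (Nat.Prime.dvd_mul ht).mp (hKq ▸ htd) with h | h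
            · exact absurd h htq
            · exact (my_prime_eq_of_dvd_card hp ht hBexp' h).symm
          subst hpt
          have hnt : ¬ p ∣ Nat.card (G ⧸ B) := by rwa [Nat.card_eq_fintype_card]
          rcases my_core ht hr hs (Ne.symm hrt) (Ne.symm hst) hrs B hBcomm hBbot hBexp
            hnt hrd hsd with h | h | h
          · exact Or.inr (Or.inr ⟨h.choose, by rw [h.choose_spec, mul_comm]⟩)
          · exact Or.inl h
          · exact Or.inr (Or.inl ⟨h.choose, by rw [h.choose_spec, mul_comm]⟩)
      · -- p = s
        have hps : p = s := by
          rcases (Nat.Prime.dvd_mul hs).mp (hKq ▸ hsd) with h | h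
          · exact absurd h hsq
          · exact (my_prime_eq_of_dvd_card hp hs hBexp' h).symm
        subst hps
        have hns : ¬ p ∣ Nat.card (G ⧸ B) := by rwa [Nat.card_eq_fintype_card]
        rcases my_core hs ht hr (hst) (Ne.symm hrs) (Ne.symm hrt) B hBcomm hBbot hBexp
          hns htd hrd with h | h | h
        · exact Or.inr (Or.inl h)
        · exact Or.inr (Or.inr ⟨h.choose, by rw [h.choose_spec, mul_comm]⟩)
        · exact Or.inl ⟨h.choose, by rw [h.choose_spec, mul_comm]⟩
    · -- p = r
      have hpr : p = r := by
        rcases (Nat.Prime.dvd_mul hr).mp (hKq ▸ hrd) with h | h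
        · exact absurd h hrq
        · exact (my_prime_eq_of_dvd_card hp hr hBexp' h).symm
      subst hpr
      have hnr : ¬ p ∣ Nat.card (G ⧸ B) := by rwa [Nat.card_eq_fintype_card]
      exact my_core hr hs ht hrs hrt hst B hBcomm hBbot hBexp hnr hsd htd

/-- If `G` is a finite solvable group and `r`, `s`, `t` are three distinct primes dividing
`|G|`, then at least one of `r*s`, `s*t`, `r*t` is the order of some element of `G`. -/
theorem stmt_1 {G : Type*} [Group G] [Fintype G] (hsolv : IsSolvable G)
    (r s t : ℕ) (hr : r.Prime) (hs : s.Prime) (ht : t.Prime)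
    (hrs : r ≠ s) (hst : s ≠ t) (hrt : r ≠ t)
    (hrd : r ∣ Fintype.card G) (hsd : s ∣ Fintype.card G) (htd : t ∣ Fintype.card G) :
    (∃ g : G, orderOf g = r * s) ∨ (∃ g : G, orderOf g = s * t) ∨
      (∃ g : G, orderOf g = r * t) := by
  haveI : Group.IsSolvable G := hsolv
  exact my_main (Fintype.card G) G le_rfl hr hs ht hrs hst hrt hrd hsd htd
end

section
/- If G is a finite group of order 2^4 * 3 * 5^2 * 7 * 11^3 * 19 that contains no element of order 7*11, no element of order 7*19, and no element of order 11*19, then G is not solvable. -/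
open Subgroup

section Aux

variable {G : Type*} [Group G]

/-- Cauchy's theorem, `Nat.card` version. -/
lemma my_cauchy [Finite G] {p : ℕ} (hp : p.Prime) (h : p ∣ Nat.card G) :
    ∃ g : G, orderOf g = p := by
  have := Fintype.ofFinite G
  have : Fact p.Prime := ⟨hp⟩
  exact exists_prime_orderOf_dvd_card p (by rwa [← Nat.card_eq_fintype_card])

/-- Lift an element of given order from a quotient of a finite group. -/
lemma lift_order [Finite G] (N : Subgroup G) [N.Normal] {m : ℕ}
    (h : ∃ q : G ⧸ N, orderOf q = m) : ∃ g : G, orderOf g = m := by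
  obtain ⟨q, hq⟩ := h
  obtain ⟨g, rfl⟩ := QuotientGroup.mk'_surjective N q
  have hdvd : m ∣ orderOf g := hq ▸ orderOf_map_dvd (QuotientGroup.mk' N) g
  obtain ⟨d, hd⟩ := hdvd
  refine ⟨g ^ d, ?_⟩
  have hg : orderOf g ≠ 0 := (orderOf_pos g).ne'
  have hd0 : d ≠ 0 := by rintro rfl; rw [hd, mul_zero] at hg; exact hg rfl
  rw [orderOf_pow, hd, Nat.gcd_eq_right (dvd_mul_left d m), Nat.mul_div_cancel _ (Nat.pos_of_ne_zero hd0)]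

/-- A nontrivial solvable group has a nontrivial abelian normal subgroup. -/
lemma exists_abelian_normal [hs : Group.IsSolvable G] [Nontrivial G] :
    ∃ A : Subgroup G, A.Normal ∧ A ≠ ⊥ ∧ ∀ x ∈ A, ∀ y ∈ A, x * y = y * x := by
  classical
  obtain ⟨n, hn⟩ := hs.solvable
  have hex : ∃ n, derivedSeries G n = ⊥ := ⟨n, hn⟩
  have hkbot : derivedSeries G (Nat.find hex) = ⊥ := Nat.find_spec hex
  have hk0 : Nat.find hex ≠ 0 := by
    intro h0
    rw [h0, derivedSeries_zero] at hkbot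
    exact top_ne_bot hkbot
  obtain ⟨j, hj⟩ : ∃ j, Nat.find hex = j + 1 :=
    ⟨Nat.find hex - 1, (Nat.succ_pred_eq_of_pos (Nat.pos_of_ne_zero hk0)).symm⟩
  rw [hj] at hkbot
  refine ⟨derivedSeries G j, derivedSeries_normal G j,
    Nat.find_min hex (hj ▸ Nat.lt_succ_self j), ?_⟩
  intro x hx y hy
  have : ⁅derivedSeries G j, derivedSeries G j⁆ ≤ ⊥ := by
    rw [← derivedSeries_succ]; exact hkbot.le
  have := Subgroup.commutator_le.mp this x hx y hy
  rw [Subgroup.mem_bot, commutatorElement_eq_one_iff_mul_comm] at this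
  exact this

/-- The `t`-torsion subgroup of an abelian subgroup `A`, as a subgroup of `G`. -/
def torsionSub (A : Subgroup G) (hA : ∀ x ∈ A, ∀ y ∈ A, x * y = y * x) (t : ℕ) : Subgroup G where
  carrier := {g | g ∈ A ∧ g ^ t = 1}
  one_mem' := ⟨A.one_mem, one_pow t⟩
  mul_mem' := by
    rintro a b ⟨ha, ha'⟩ ⟨hb, hb'⟩
    exact ⟨A.mul_mem ha hb, by rw [Commute.mul_pow (hA a ha b hb), ha', hb', one_mul]⟩
  inv_mem' := by
    rintro a ⟨ha, ha'⟩
    exact ⟨A.inv_mem ha, by rw [inv_pow, ha', inv_one]⟩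

lemma torsionSub_normal (A : Subgroup G) (hN : A.Normal)
    (hA : ∀ x ∈ A, ∀ y ∈ A, x * y = y * x) (t : ℕ) : (torsionSub A hA t).Normal := by
  constructor
  rintro a ⟨ha, ha'⟩ g
  exact ⟨hN.conj_mem a ha g, by rw [conj_pow, ha', mul_one, mul_inv_cancel]⟩

lemma mem_torsionSub {A : Subgroup G} {hA : ∀ x ∈ A, ∀ y ∈ A, x * y = y * x} {t : ℕ} {g : G} :
    g ∈ torsionSub A hA t ↔ g ∈ A ∧ g ^ t = 1 := Iff.rfl

/-- If `T` is a normal subgroup of prime order `p` and `x` has prime order `s` with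
`s ∤ p - 1`, then `x` commutes with an element of order `p`. -/
lemma commute_of_small_aut [Finite G] (T : Subgroup G) [T.Normal]
    {p : ℕ} (hp : p.Prime) (hT : Nat.card T = p) {x : G} {s : ℕ} (hs : s.Prime)
    (hx : orderOf x = s) (hns : ¬ s ∣ p - 1) :
    ∃ u : G, orderOf u = p ∧ Commute x u := by
  have : Fact p.Prime := ⟨hp⟩
  have hcyc : IsCyclic T := isCyclic_of_prime_card hT
  have hfinaut : Finite (MulAut T) := by infer_instance
  set φ : MulAut T := MulAut.conjNormal x with hφdef
  have h1 : orderOf φ ∣ s := hx ▸ orderOf_map_dvd MulAut.conjNormal x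
  have h2 : orderOf φ ∣ p - 1 := by
    have := orderOf_dvd_natCard φ
    rwa [IsCyclic.card_mulAut, hT, Nat.totient_prime hp] at this
  have hφ1 : φ = 1 := by
    rcases (Nat.dvd_prime hs).mp h1 with h | h
    · exact orderOf_eq_one_iff.mp h
    · exact absurd (h ▸ h2) hns
  obtain ⟨u, hu⟩ := my_cauchy (G := T) hp (by rw [hT])
  refine ⟨(u : G), ?_, ?_⟩
  · rw [← hu]; exact orderOf_injective T.subtype Subtype.coe_injective u
  · have h4 : φ u = u := by rw [hφ1]; rfl
    have h3 := congrArg (Subtype.val) h4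
    rw [hφdef, MulAut.conjNormal_apply] at h3
    exact mul_inv_eq_iff_eq_mul.mp h3

end Aux

section MainDev
universe u

/-- In a nontrivial finite solvable group there is a nontrivial normal abelian
`t`-torsion subgroup for some prime `t`, containing an element of order `t`. -/
lemma exists_torsion (H : Type u) [Group H] [Finite H] [Group.IsSolvable H] [Nontrivial H] :
    ∃ (t : ℕ) (T : Subgroup H) (v : H), t.Prime ∧ T.Normal ∧
      (∀ x ∈ T, ∀ y ∈ T, x * y = y * x) ∧ (∀ g ∈ T, g ^ t = 1) ∧
      v ∈ T ∧ orderOf v = t ∧ ∃ k, k ≠ 0 ∧ Nat.card T = t ^ k := by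
  obtain ⟨A, hAnorm, hAbot, hAab⟩ := exists_abelian_normal (G := H)
  obtain ⟨u, hu1⟩ := Subgroup.ne_bot_iff_exists_ne_one.mp hAbot
  have hu1' : (u : H) ≠ 1 := fun h => hu1 (Subtype.ext h)
  have hord0 : orderOf (u : H) ≠ 0 := (orderOf_pos _).ne'
  have hord1 : orderOf (u : H) ≠ 1 := by simpa [orderOf_eq_one_iff] using hu1'
  set t := (orderOf (u : H)).minFac with htdef
  have ht : t.Prime := Nat.minFac_prime hord1
  have htdvd : t ∣ orderOf (u : H) := Nat.minFac_dvd _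
  set v := (u : H) ^ (orderOf (u : H) / t) with hvdef
  have hvord : orderOf v = t := by
    rw [hvdef, orderOf_pow, Nat.gcd_eq_right (Nat.div_dvd_of_dvd htdvd),
      Nat.div_div_self htdvd hord0]
  have hvA : v ∈ A := A.pow_mem u.2 _
  have hvt : v ^ t = 1 := by rw [← hvord]; exact pow_orderOf_eq_one v
  refine ⟨t, torsionSub A hAab t, v, ht, torsionSub_normal A hAnorm hAab t,
    ?_, fun g hg => hg.2, ⟨hvA, hvt⟩, hvord, ?_⟩
  · intro x hx y hy; exact hAab x hx.1 y hy.1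
  · have hpT : IsPGroup t (torsionSub A hAab t) := by
      intro g
      refine ⟨1, ?_⟩
      rw [pow_one]
      apply Subtype.ext
      simp only [SubmonoidClass.coe_pow, OneMemClass.coe_one]
      exact g.2.2
    haveI : Fact t.Prime := ⟨ht⟩
    obtain ⟨k, hk⟩ := IsPGroup.iff_card.mp hpT
    have hvne : v ≠ 1 := by
      intro h
      rw [h, orderOf_one] at hvord
      exact ht.ne_one hvord.symm
    have hTnt : Nontrivial (torsionSub A hAab t) :=
      ⟨⟨v, hvA, hvt⟩, 1, by simp [Subtype.ext_iff, hvne]⟩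
    refine ⟨k, ?_, hk⟩
    rintro rfl
    rw [pow_zero] at hk
    exact (Finite.one_lt_card (α := torsionSub A hAab t)).ne' hk

/-- Lemma B: a solvable group whose order divides `2^4·3·5^2·7·19` and is divisible by
`7` and `19` has an element of order `133`. -/
lemma lemB : ∀ (n : ℕ) (H : Type u) [Group H] [Finite H], IsSolvable H →
    Nat.card H = n → Nat.card H ∣ 2^4*3*5^2*7*19 → 7 ∣ Nat.card H → 19 ∣ Nat.card H →
    ∃ h : H, orderOf h = 133 := by
  intro n
  induction n using Nat.strong_induction_on with
  | _ n IH =>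
  intro H _ _ hsolv hn hbnd h7 h19
  haveI : Group.IsSolvable H := hsolv
  haveI hnt : Nontrivial H := by
    rw [← Finite.one_lt_card_iff_nontrivial]
    have h1 : Nat.card H ≠ 1 := by
      intro h1; rw [h1] at h7; norm_num at h7
    have h2 : 0 < Nat.card H := Nat.card_pos
    omega
  obtain ⟨t, T, v, ht, hTn, _hTab, hTt, hvT, hvord, k, hk0, hk⟩ := exists_torsion H
  haveI := hTn
  have hquot : Nat.card H = Nat.card (H ⧸ T) * Nat.card T :=
    card_eq_card_quotient_mul_card_subgroup T
  have hT2 : 1 < Nat.card T := by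
    rw [hk]
    calc 1 < t := ht.one_lt
    _ ≤ t ^ k := Nat.le_self_pow hk0 t
  have hQlt : Nat.card (H ⧸ T) < n := by
    rw [← hn, hquot]
    exact lt_mul_of_one_lt_right Nat.card_pos hT2
  have hQdvd : Nat.card (H ⧸ T) ∣ Nat.card H := ⟨Nat.card T, hquot⟩
  -- helper to derive t = s when s fails to divide the quotient
  have hteq : ∀ s : ℕ, s.Prime → s ∣ Nat.card H → ¬ s ∣ Nat.card (H ⧸ T) → t = s := by
    intro s hs hsH hsQ
    have : s ∣ Nat.card (H ⧸ T) * Nat.card T := hquot ▸ hsH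
    rcases (Nat.Prime.dvd_mul hs).mp this with h | h
    · exact absurd h hsQ
    · rw [hk] at h
      exact ((Nat.prime_dvd_prime_iff_eq hs ht).mp (hs.dvd_of_dvd_pow h)).symm
  have hTdvd : Nat.card T ∣ 2^4*3*5^2*7*19 := (Subgroup.card_subgroup_dvd_card T).trans hbnd
  by_cases h7Q : 7 ∣ Nat.card (H ⧸ T)
  · by_cases h19Q : 19 ∣ Nat.card (H ⧸ T)
    · have := IH _ hQlt (H ⧸ T) (inferInstanceAs (Group.IsSolvable _)) rfl (hQdvd.trans hbnd) h7Q h19Q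
      exact lift_order T this
    · have ht19 : t = 19 := hteq 19 (by norm_num) h19 h19Q
      subst ht19
      have hk1 : k = 1 := by
        by_contra hne1
        have h2 : (19:ℕ) ^ 2 ∣ 2^4*3*5^2*7*19 :=
          (pow_dvd_pow 19 (show 2 ≤ k by omega)).trans (hk ▸ hTdvd)
        norm_num at h2
      rw [hk1, pow_one] at hk
      obtain ⟨x, hx⟩ := my_cauchy (G := H) (by norm_num : Nat.Prime 7) h7
      obtain ⟨w, hw, hcomm⟩ := commute_of_small_aut T (by norm_num) hk
        (by norm_num : Nat.Prime 7) hx (by norm_num)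
      refine ⟨x * w, ?_⟩
      rw [hcomm.orderOf_mul_eq_mul_orderOf_of_coprime (by rw [hx, hw]; norm_num), hx, hw]
  · have ht7 : t = 7 := hteq 7 (by norm_num) h7 h7Q
    subst ht7
    have hk1 : k = 1 := by
      by_contra hne1
      have h2 : (7:ℕ) ^ 2 ∣ 2^4*3*5^2*7*19 :=
        (pow_dvd_pow 7 (show 2 ≤ k by omega)).trans (hk ▸ hTdvd)
      norm_num at h2
    rw [hk1, pow_one] at hk
    obtain ⟨x, hx⟩ := my_cauchy (G := H) (by norm_num : Nat.Prime 19) h19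
    obtain ⟨w, hw, hcomm⟩ := commute_of_small_aut T (by norm_num) hk
      (by norm_num : Nat.Prime 19) hx (by norm_num)
    refine ⟨x * w, ?_⟩
    rw [hcomm.orderOf_mul_eq_mul_orderOf_of_coprime (by rw [hx, hw]; norm_num), hx, hw]

end MainDev

section Main
universe u

/-- Main lemma: a solvable group whose order divides `2^4·3·5^2·7·11^3·19` and is
divisible by `7`, `11` and `19` has an element of order `77`, `133` or `209`. -/
lemma lemA : ∀ (n : ℕ) (H : Type u) [Group H] [Finite H], IsSolvable H →
    Nat.card H = n → Nat.card H ∣ 2^4*3*5^2*7*11^3*19 →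
    7 ∣ Nat.card H → 11 ∣ Nat.card H → 19 ∣ Nat.card H →
    ∃ h : H, orderOf h = 77 ∨ orderOf h = 133 ∨ orderOf h = 209 := by
  intro n
  induction n using Nat.strong_induction_on with
  | _ n IH =>
  intro H _ _ hsolv hn hbnd h7 h11 h19
  haveI : Group.IsSolvable H := hsolv
  haveI hnt : Nontrivial H := by
    rw [← Finite.one_lt_card_iff_nontrivial]
    have h1 : Nat.card H ≠ 1 := by
      intro h1; rw [h1] at h7; norm_num at h7
    have h2 : 0 < Nat.card H := Nat.card_pos
    omega
  obtain ⟨t, T, v, ht, hTn, hTab, hTt, hvT, hvord, k, hk0, hk⟩ := exists_torsion H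
  haveI := hTn
  have hquot : Nat.card H = Nat.card (H ⧸ T) * Nat.card T :=
    card_eq_card_quotient_mul_card_subgroup T
  have hT2 : 1 < Nat.card T := by
    rw [hk]
    calc 1 < t := ht.one_lt
    _ ≤ t ^ k := Nat.le_self_pow hk0 t
  have hQlt : Nat.card (H ⧸ T) < n := by
    rw [← hn, hquot]
    exact lt_mul_of_one_lt_right Nat.card_pos hT2
  have hQdvd : Nat.card (H ⧸ T) ∣ Nat.card H := ⟨Nat.card T, hquot⟩
  have hteq : ∀ s : ℕ, s.Prime → s ∣ Nat.card H → ¬ s ∣ Nat.card (H ⧸ T) → t = s := by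
    intro s hs hsH hsQ
    have : s ∣ Nat.card (H ⧸ T) * Nat.card T := hquot ▸ hsH
    rcases (Nat.Prime.dvd_mul hs).mp this with h | h
    · exact absurd h hsQ
    · rw [hk] at h
      exact ((Nat.prime_dvd_prime_iff_eq hs ht).mp (hs.dvd_of_dvd_pow h)).symm
  have hTdvd : Nat.card T ∣ 2^4*3*5^2*7*11^3*19 := (Subgroup.card_subgroup_dvd_card T).trans hbnd
  by_cases h7Q : 7 ∣ Nat.card (H ⧸ T)
  · by_cases h11Q : 11 ∣ Nat.card (H ⧸ T)
    · by_cases h19Q : 19 ∣ Nat.card (H ⧸ T)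
      · -- recurse into the quotient
        obtain ⟨q, hq⟩ := IH _ hQlt (H ⧸ T) (inferInstanceAs (Group.IsSolvable _)) rfl (hQdvd.trans hbnd) h7Q h11Q h19Q
        rcases hq with h | h | h
        · obtain ⟨g, hg⟩ := lift_order T ⟨q, h⟩; exact ⟨g, Or.inl hg⟩
        · obtain ⟨g, hg⟩ := lift_order T ⟨q, h⟩; exact ⟨g, Or.inr (Or.inl hg)⟩
        · obtain ⟨g, hg⟩ := lift_order T ⟨q, h⟩; exact ⟨g, Or.inr (Or.inr hg)⟩
      · -- t = 19 : x of order 11 commutes with an element of order 19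
        have ht19 : t = 19 := hteq 19 (by norm_num) h19 h19Q
        subst ht19
        have hk1 : k = 1 := by
          by_contra hne1
          have h2 : (19:ℕ) ^ 2 ∣ 2^4*3*5^2*7*11^3*19 :=
            (pow_dvd_pow 19 (show 2 ≤ k by omega)).trans (hk ▸ hTdvd)
          norm_num at h2
        rw [hk1, pow_one] at hk
        obtain ⟨x, hx⟩ := my_cauchy (G := H) (by norm_num : Nat.Prime 11) h11
        obtain ⟨w, hw, hcomm⟩ := commute_of_small_aut T (by norm_num) hk
          (by norm_num : Nat.Prime 11) hx (by norm_num)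
        refine ⟨x * w, Or.inr (Or.inr ?_)⟩
        rw [hcomm.orderOf_mul_eq_mul_orderOf_of_coprime (by rw [hx, hw]; norm_num), hx, hw]
    · -- t = 11 : pass to the centralizer of T
      have ht11 : t = 11 := hteq 11 (by norm_num) h11 h11Q
      subst ht11
      set C := Subgroup.centralizer (T : Set H) with hCdef
      haveI hCn : C.Normal := by
        constructor
        intro c hc g
        rw [hCdef, Subgroup.mem_centralizer_iff] at hc ⊢
        intro w hw
        have h1 : (g⁻¹ * w * g) ∈ T := by
          have := hTn.conj_mem w hw g⁻¹
          simpa using this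
        have h2 := hc _ h1
        calc w * (g * c * g⁻¹) = g * ((g⁻¹ * w * g) * c) * g⁻¹ := by group
        _ = g * (c * (g⁻¹ * w * g)) * g⁻¹ := by rw [h2]
        _ = (g * c * g⁻¹) * w := by group
      have hTC : T ≤ C := by
        intro a ha
        rw [hCdef, Subgroup.mem_centralizer_iff]
        intro w hw
        exact hTab w hw a ha
      by_cases h7C : 7 ∣ Nat.card C
      · obtain ⟨z, hz⟩ := my_cauchy (G := C) (by norm_num : Nat.Prime 7) h7C
        have hz' : orderOf (z : H) = 7 := by
          rw [← hz]; exact orderOf_injective C.subtype Subtype.coe_injective z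
        have hcomm : Commute (z : H) v := (Subgroup.mem_centralizer_iff.mp z.2 v hvT).symm
        refine ⟨(z : H) * v, Or.inl ?_⟩
        rw [hcomm.orderOf_mul_eq_mul_orderOf_of_coprime (by rw [hz', hvord]; norm_num), hz', hvord]
      by_cases h19C : 19 ∣ Nat.card C
      · obtain ⟨z, hz⟩ := my_cauchy (G := C) (by norm_num : Nat.Prime 19) h19C
        have hz' : orderOf (z : H) = 19 := by
          rw [← hz]; exact orderOf_injective C.subtype Subtype.coe_injective z
        have hcomm : Commute v (z : H) := Subgroup.mem_centralizer_iff.mp z.2 v hvT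
        refine ⟨v * (z : H), Or.inr (Or.inr ?_)⟩
        rw [hcomm.orderOf_mul_eq_mul_orderOf_of_coprime (by rw [hz', hvord]; norm_num), hz', hvord]
      · -- apply Lemma B to H ⧸ C
        have hquot2 : Nat.card H = Nat.card (H ⧸ C) * Nat.card C :=
          card_eq_card_quotient_mul_card_subgroup C
        have h7Q2 : 7 ∣ Nat.card (H ⧸ C) := by
          rcases (Nat.Prime.dvd_mul (by norm_num : Nat.Prime 7)).mp (hquot2 ▸ h7) with h | h
          · exact h
          · exact absurd h h7C
        have h19Q2 : 19 ∣ Nat.card (H ⧸ C) := by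
          rcases (Nat.Prime.dvd_mul (by norm_num : Nat.Prime 19)).mp (hquot2 ▸ h19) with h | h
          · exact h
          · exact absurd h h19C
        -- card (H ⧸ C) divides card (H ⧸ T)
        obtain ⟨c0, hc0⟩ := Subgroup.card_dvd_of_le hTC
        have hQ2dvd : Nat.card (H ⧸ C) ∣ Nat.card (H ⧸ T) := by
          refine ⟨c0, ?_⟩
          have hTpos : 0 < Nat.card T := Nat.card_pos
          have : Nat.card (H ⧸ T) * Nat.card T = (Nat.card (H ⧸ C) * c0) * Nat.card T := by
            rw [← hquot]
            calc Nat.card H = Nat.card (H ⧸ C) * Nat.card C := hquot2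
            _ = Nat.card (H ⧸ C) * (Nat.card T * c0) := by rw [hc0]
            _ = (Nat.card (H ⧸ C) * c0) * Nat.card T := by ring
          exact Nat.eq_of_mul_eq_mul_right hTpos this
        -- card (H ⧸ T) divides 2^4*3*5^2*7*19
        have hQTbnd : Nat.card (H ⧸ T) ∣ 2^4*3*5^2*7*19 := by
          have hcop : Nat.Coprime (Nat.card (H ⧸ T)) (11^3) :=
            Nat.Coprime.pow_right 3 ((Nat.Prime.coprime_iff_not_dvd (by norm_num)).mpr h11Q).symm
          have hdvd : Nat.card (H ⧸ T) ∣ (2^4*3*5^2*7*19) * 11^3 := by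
            have : (2^4*3*5^2*7*11^3*19 : ℕ) = (2^4*3*5^2*7*19) * 11^3 := by norm_num
            exact this ▸ (hQdvd.trans hbnd)
          exact hcop.dvd_of_dvd_mul_right hdvd
        obtain ⟨q, hq⟩ := lemB (Nat.card (H ⧸ C)) (H ⧸ C) (inferInstanceAs (Group.IsSolvable _)) rfl
          (hQ2dvd.trans hQTbnd) h7Q2 h19Q2
        obtain ⟨g, hg⟩ := lift_order C ⟨q, hq⟩
        exact ⟨g, Or.inr (Or.inl hg)⟩
  · -- t = 7 : x of order 11 commutes with an element of order 7
    have ht7 : t = 7 := hteq 7 (by norm_num) h7 h7Q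
    subst ht7
    have hk1 : k = 1 := by
      by_contra hne1
      have h2 : (7:ℕ) ^ 2 ∣ 2^4*3*5^2*7*11^3*19 :=
        (pow_dvd_pow 7 (show 2 ≤ k by omega)).trans (hk ▸ hTdvd)
      norm_num at h2
    rw [hk1, pow_one] at hk
    obtain ⟨x, hx⟩ := my_cauchy (G := H) (by norm_num : Nat.Prime 11) h11
    obtain ⟨w, hw, hcomm⟩ := commute_of_small_aut T (by norm_num) hk
      (by norm_num : Nat.Prime 11) hx (by norm_num)
    refine ⟨w * x, Or.inl ?_⟩
    rw [hcomm.symm.orderOf_mul_eq_mul_orderOf_of_coprime (by rw [hx, hw]; norm_num), hx, hw]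

end Main

/-- If `G` is a finite group of order `2^4 * 3 * 5^2 * 7 * 11^3 * 19` containing no
element of order `7*11 = 77`, no element of order `7*19 = 133`, and no element of order
`11*19 = 209`, then `G` is not solvable. -/
theorem stmt_11 {G : Type*} [Group G] [Fintype G]
    (hcard : Fintype.card G = 2 ^ 4 * 3 * 5 ^ 2 * 7 * 11 ^ 3 * 19)
    (h77 : ¬∃ g : G, orderOf g = 7 * 11)
    (h133 : ¬∃ g : G, orderOf g = 7 * 19)
    (h209 : ¬∃ g : G, orderOf g = 11 * 19) :
    ¬ IsSolvable G := by
  intro hsolv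
  have hncard : Nat.card G = 2^4*3*5^2*7*11^3*19 := by
    rw [Nat.card_eq_fintype_card, hcard]
  obtain ⟨g, hg⟩ := lemA (Nat.card G) G hsolv rfl (hncard ▸ dvd_refl _)
    (by rw [hncard]; norm_num) (by rw [hncard]; norm_num) (by rw [hncard]; norm_num)
  rcases hg with h | h | h
  · exact h77 ⟨g, by rw [h]⟩
  · exact h133 ⟨g, by rw [h]⟩
  · exact h209 ⟨g, by rw [h]⟩
end

section
/- In a finite solvable group whose prime graph contains three pairwise non-adjacent vertices, we reach a contradiction; equivalently: for a finite solvable group G, there do not exist three distinct primes p, q, r dividing |G| such that G has no element of order pq, no element of order pr, and no element of order qr. -/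
open Subgroup Finset Pointwise

set_option linter.unusedSectionVars false
set_option maxHeartbeats 1000000

section F
variable {A N : Type*} [Group A] [Fintype A] [CommGroup N] [Fintype N]

lemma telescope_aux (ρ : A →* MulAut N) (a : A)
    (hfree : ∀ v : N, ρ a v = v → v = 1) (v : N) :
    ∏ i ∈ Finset.range (orderOf a), ρ (a ^ i) v = 1 := by
  classical
  have hinj : Function.Injective (fun w : N => ρ a w * w⁻¹) := by
    intro x y h
    simp only at h
    have h' : ρ a x * y = ρ a y * x := by
      calc ρ a x * y = ρ a x * x⁻¹ * x * y := by rw [inv_mul_cancel_right]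
        _ = ρ a y * y⁻¹ * x * y := by rw [h]
        _ = ρ a y * y⁻¹ * (y * x) := by rw [mul_assoc (ρ a y * y⁻¹), mul_comm x y]
        _ = ρ a y * x := by rw [mul_assoc, inv_mul_cancel_left]
    have hx : ρ a x = ρ a y * x * y⁻¹ := by
      rw [eq_mul_inv_iff_mul_eq, h']
    have h2 : ρ a (x * y⁻¹) = x * y⁻¹ := by
      simp only [map_mul, map_inv]
      rw [mul_inv_eq_iff_eq_mul, hx, mul_assoc, mul_comm (ρ a y)]
    have := hfree _ h2
    rwa [mul_inv_eq_one] at this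
  obtain ⟨u, hu⟩ := (Finite.injective_iff_surjective.mp hinj) v
  simp only at hu
  subst hu
  have key : ∀ i : ℕ, ρ (a ^ i) (ρ a u * u⁻¹) = ρ (a ^ (i+1)) u * (ρ (a ^ i) u)⁻¹ := by
    intro i
    rw [map_mul, map_inv, pow_succ, map_mul]
    rfl
  simp_rw [key]
  rw [Finset.prod_mul_distrib, Finset.prod_inv_distrib]
  have shift : ∏ i ∈ Finset.range (orderOf a), ρ (a ^ (i+1)) u
      = ∏ i ∈ Finset.range (orderOf a), ρ (a ^ i) u := by
    have h1 := Finset.prod_range_succ' (fun i => ρ (a ^ i) u) (orderOf a)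
    have h2 := Finset.prod_range_succ (fun i => ρ (a ^ i) u) (orderOf a)
    have h3 : ρ (a ^ orderOf a) u = ρ (a ^ 0) u := by
      rw [pow_orderOf_eq_one, pow_zero]
    rw [h2, h3] at h1
    rw [pow_zero] at h1
    exact mul_right_cancel h1.symm
  rw [shift, mul_inv_cancel]

lemma lemF (ρ : A →* MulAut N) {p q r : ℕ} (hp : p.Prime) (hq : q.Prime) (hr : r.Prime)
    (hpq : p ≠ q) (hpr : p ≠ r) (hqr : q ≠ r)
    (hNnt : ∃ v : N, v ≠ 1) (hexp : ∀ v : N, v ^ p = 1)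
    (hfree : ∀ a : A, a ≠ 1 → ∀ v : N, ρ a v = v → v = 1)
    (horder : ∀ a : A, a ≠ 1 → orderOf a = q ∨ orderOf a = r)
    (hcard : Fintype.card A = q * r ∨ Fintype.card A = q * q) : False := by
  classical
  haveI := Fact.mk hp
  haveI := Fact.mk hq
  haveI := Fact.mk hr
  obtain ⟨v, hv⟩ := hNnt
  have hA1 : (1 : ℕ) < Fintype.card A := by
    rcases hcard with h | h <;> rw [h] <;> nlinarith [hq.two_le, hr.two_le]
  have hnt : Nontrivial A := Fintype.one_lt_card_iff_nontrivial.mp hA1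
  obtain ⟨b₀, hb₀⟩ := exists_ne (1 : A)
  have hmemS : ∀ b : A, b ∈ Finset.univ.erase (1 : A) ↔ b ≠ 1 := by
    intro b; simp [Finset.mem_erase]
  have hprimeord : ∀ a : A, a ≠ 1 → (orderOf a).Prime := by
    intro a ha
    rcases horder a ha with h | h <;> rw [h] <;> assumption
  have hfiber : ∀ a : A, a ≠ 1 →
      (Finset.univ.erase (1 : A)).filter (fun b => Subgroup.zpowers b = Subgroup.zpowers a)
      = (Finset.univ.filter (fun b => b ∈ Subgroup.zpowers a)).erase 1 := by
    intro a ha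
    ext b
    simp only [Finset.mem_filter, Finset.mem_erase, Finset.mem_univ, and_true, true_and]
    constructor
    · rintro ⟨hb1, hbg⟩
      exact ⟨hb1, hbg ▸ Subgroup.mem_zpowers b⟩
    · rintro ⟨hb1, hbmem⟩
      refine ⟨hb1, ?_⟩
      have hle : Subgroup.zpowers b ≤ Subgroup.zpowers a := by
        rw [Subgroup.zpowers_le]; exact hbmem
      have hcb : Nat.card (Subgroup.zpowers b) = orderOf b := Nat.card_zpowers b
      have hca : Nat.card (Subgroup.zpowers a) = orderOf a := Nat.card_zpowers a
      have hdvd : Nat.card (Subgroup.zpowers b) ∣ Nat.card (Subgroup.zpowers a) :=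
        Subgroup.card_dvd_of_le hle
      rw [hcb, hca] at hdvd
      have : orderOf b = orderOf a :=
        (Nat.prime_dvd_prime_iff_eq (hprimeord b hb1) (hprimeord a ha)).mp hdvd
      exact Subgroup.eq_of_le_of_card_ge hle (by rw [hcb, hca, this])
  have hsubprod : ∀ a : A, a ≠ 1 → ∀ w : N,
      ∏ b ∈ Finset.univ.filter (fun b => b ∈ Subgroup.zpowers a), ρ b w = 1 := by
    intro a ha1 w
    have hn : 0 < orderOf a := orderOf_pos a
    rw [← telescope_aux ρ a (hfree a ha1) w]
    refine (Finset.prod_nbij (fun i => a ^ i) ?_ ?_ ?_ ?_).symm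
    · intro i hi
      simp only [Finset.mem_filter, Finset.mem_univ, true_and]
      exact ⟨(i : ℤ), by simp [zpow_natCast]⟩
    · intro i hi j hj hij
      have hi' : i < orderOf a := by simpa using hi
      have hj' : j < orderOf a := by simpa using hj
      exact pow_injOn_Iio_orderOf hi' hj' hij
    · intro b hb
      have hb' : b ∈ Subgroup.zpowers a := by simpa using hb
      obtain ⟨m, hm⟩ := mem_powers_iff_mem_zpowers.mpr hb'
      refine ⟨m % orderOf a, ?_, ?_⟩
      · simpa using Nat.mod_lt m hn
      · show a ^ (m % orderOf a) = b
        rw [pow_mod_orderOf]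
        exact hm
    · intro i hi
      rfl
  have hfibprod : ∀ a : A, a ≠ 1 → ∀ w : N,
      ∏ b ∈ (Finset.univ.erase (1:A)).filter
        (fun b => Subgroup.zpowers b = Subgroup.zpowers a), ρ b w = w⁻¹ := by
    intro a ha w
    rw [hfiber a ha]
    have h1mem : (1 : A) ∈ Finset.univ.filter (fun b => b ∈ Subgroup.zpowers a) := by
      simp [Subgroup.one_mem]
    have hkey := Finset.mul_prod_erase _ (fun b => ρ b w) h1mem
    rw [hsubprod a ha w, map_one] at hkey
    have h1 : (1 : MulAut N) w = w := rfl
    rw [h1] at hkey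
    exact inv_eq_of_mul_eq_one_right hkey |>.symm
  -- the global product is trivial
  have hphi : ∀ w : N, ∏ a : A, ρ a w = 1 := by
    intro w
    apply hfree b₀ hb₀
    rw [map_prod (ρ b₀) (fun a => ρ a w) Finset.univ]
    have hstep : ∀ a : A, ρ b₀ (ρ a w) = ρ (b₀ * a) w := by
      intro a; rw [map_mul]; rfl
    simp_rw [hstep]
    exact Fintype.prod_equiv (Equiv.mulLeft b₀) _ _ (fun a => rfl)
  -- fiber decomposition
  set T : Finset (Subgroup A) :=
    (Finset.univ.erase (1:A)).image (fun a => Subgroup.zpowers a) with hT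
  have hmapsto : ∀ b ∈ Finset.univ.erase (1:A),
      Subgroup.zpowers b ∈ T := fun b hb => Finset.mem_image_of_mem _ hb
  have hmain : ∀ w : N, w * (w⁻¹) ^ T.card = 1 := by
    intro w
    have h0 := hphi w
    rw [← Finset.mul_prod_erase Finset.univ (fun a => ρ a w) (Finset.mem_univ 1)] at h0
    have h1 : ρ (1:A) w = w := by rw [map_one]; rfl
    rw [h1] at h0
    have hsplit : ∏ a ∈ Finset.univ.erase (1:A), ρ a w
        = ∏ C ∈ T, ∏ a ∈ (Finset.univ.erase (1:A)).filter
            (fun b => Subgroup.zpowers b = C), ρ a w :=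
      (Finset.prod_fiberwise_of_maps_to hmapsto _).symm
    rw [hsplit] at h0
    have hinner : ∀ C ∈ T, ∏ a ∈ (Finset.univ.erase (1:A)).filter
        (fun b => Subgroup.zpowers b = C), ρ a w = w⁻¹ := by
      intro C hC
      obtain ⟨a, ha, rfl⟩ := Finset.mem_image.mp hC
      exact hfibprod a ((hmemS a).mp ha) w
    rw [Finset.prod_congr rfl hinner, Finset.prod_const] at h0
    exact h0
  -- k := T.card ; p divides k - 1
  have hb₀S : b₀ ∈ Finset.univ.erase (1:A) := (hmemS b₀).mpr hb₀
  have hk1 : 1 ≤ T.card := Finset.card_pos.mpr ⟨_, hmapsto b₀ hb₀S⟩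
  have hvk : v ^ (T.card - 1) = 1 := by
    have h0 := hmain v
    rw [inv_pow, mul_inv_eq_one] at h0
    have h2 : v ^ (T.card - 1) * v = v ^ T.card := by
      rw [← pow_succ]
      congr 1
      omega
    have h3 : v ^ (T.card - 1) * v = (1 : N) * v := by
      rw [h2, ← h0, one_mul]
    exact mul_right_cancel h3
  have hordv : orderOf v = p := orderOf_eq_prime (hexp v) hv
  have hpk : p ∣ T.card - 1 := by
    rw [← hordv]; exact orderOf_dvd_of_pow_eq_one hvk
  -- counting: card A - 1 = sum of (card C - 1)
  have hfibcard : ∀ C ∈ T, ((Finset.univ.erase (1:A)).filter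
      (fun b => Subgroup.zpowers b = C)).card = Nat.card C - 1 := by
    intro C hC
    obtain ⟨a, ha, rfl⟩ := Finset.mem_image.mp hC
    rw [hfiber a ((hmemS a).mp ha)]
    rw [Finset.card_erase_of_mem (by simp [Subgroup.one_mem])]
    congr 1
    rw [Nat.card_eq_fintype_card]
    exact (Fintype.card_subtype _).symm
  have hcount : Fintype.card A - 1 = ∑ C ∈ T, (Nat.card C - 1) := by
    have h0 := Finset.card_eq_sum_card_fiberwise hmapsto
    rw [Finset.card_erase_of_mem (Finset.mem_univ 1), Finset.card_univ] at h0
    rw [h0]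
    exact Finset.sum_congr rfl hfibcard
  -- each C in T has card q or r
  have hTcard : ∀ C ∈ T, Nat.card C = q ∨ Nat.card C = r := by
    intro C hC
    obtain ⟨a, ha, rfl⟩ := Finset.mem_image.mp hC
    rw [Nat.card_zpowers]
    exact horder a ((hmemS a).mp ha)
  set Tq : Finset (Subgroup A) := T.filter (fun C => Nat.card C = q) with hTq
  set Tr : Finset (Subgroup A) := T.filter (fun C => ¬ Nat.card C = q) with hTr
  have hTrr : ∀ C ∈ Tr, Nat.card C = r := by
    intro C hC
    rw [hTr, Finset.mem_filter] at hC
    rcases hTcard C hC.1 with h | h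
    · exact absurd h hC.2
    · exact h
  have hksplit : Tq.card + Tr.card = T.card :=
    Finset.card_filter_add_card_filter_not _
  have hsumsplit : Fintype.card A - 1 = Tq.card * (q - 1) + Tr.card * (r - 1) := by
    rw [hcount, ← Finset.sum_filter_add_sum_filter_not T (fun C => Nat.card C = q)]
    congr 1
    · rw [Finset.sum_congr rfl (fun C hC => by
        rw [(Finset.mem_filter.mp hC).2]), Finset.sum_const, smul_eq_mul]
    · rw [Finset.sum_congr rfl (fun C hC => by rw [hTrr C hC]),
        Finset.sum_const, smul_eq_mul]
  -- Sylow counting helper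
  have hsylcount : ∀ s : ℕ, s.Prime → (Nat.card A).factorization s = 1 →
      (T.filter (fun C : Subgroup A => Nat.card C = s)).card = Nat.card (Sylow s A) := by
    intro s hs hfs
    haveI := Fact.mk hs
    have hsylscard : ∀ P : Sylow s A, Nat.card (P : Subgroup A) = s := fun P => by
      rw [P.card_eq_multiplicity, hfs, pow_one]
    have himg : T.filter (fun C : Subgroup A => Nat.card C = s)
        = Finset.univ.image (fun P : Sylow s A => (P : Subgroup A)) := by
      ext C
      simp only [Finset.mem_image, Finset.mem_univ, true_and, Finset.mem_filter]
      constructor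
      · rintro ⟨hCT, hCs⟩
        have hCs' : Nat.card C = s ^ (Nat.card A).factorization s := by
          rw [hfs, pow_one]; exact hCs
        exact ⟨Sylow.ofCard C hCs', Sylow.coe_ofCard C hCs'⟩
      · rintro ⟨P, rfl⟩
        have hcardP : Nat.card (P : Subgroup A) = s := hsylscard P
        have hPnt : Nontrivial ((P : Subgroup A)) := by
          rw [← Finite.one_lt_card_iff_nontrivial, hcardP]
          exact hs.one_lt
        obtain ⟨x, hx⟩ := exists_ne (1 : (P : Subgroup A))
        have hxA : (x : A) ≠ 1 := fun h => hx (Subtype.ext h)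
        have hordx : orderOf (x : A) ∣ s := by
          have hdv : Nat.card (Subgroup.zpowers (x:A)) ∣ Nat.card ((P : Subgroup A)) :=
            Subgroup.card_dvd_of_le (Subgroup.zpowers_le.mpr x.2)
          rwa [Nat.card_zpowers, hcardP] at hdv
        have hordx' : orderOf (x : A) = s := by
          rcases hs.eq_one_or_self_of_dvd _ hordx with h | h
          · exact absurd (orderOf_eq_one_iff.mp h) hxA
          · exact h
        have heq : Subgroup.zpowers (x : A) = (P : Subgroup A) := by
          apply Subgroup.eq_of_le_of_card_ge (Subgroup.zpowers_le.mpr x.2)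
          rw [Nat.card_zpowers, hcardP, hordx']
        constructor
        · rw [hT]
          exact Finset.mem_image.mpr ⟨(x : A), (hmemS _).mpr hxA, heq⟩
        · exact hcardP
    rw [himg, Finset.card_image_of_injective _ (fun P Q h => Sylow.ext h),
      Finset.card_univ, Nat.card_eq_fintype_card]
  -- index of a Sylow subgroup
  have hsylindex : ∀ s t : ℕ, s.Prime → Nat.card A = s * t →
      (Nat.card A).factorization s = 1 →
      (T.filter (fun C : Subgroup A => Nat.card C = s)).card ∣ t := by
    intro s t hs hst hfs
    haveI := Fact.mk hs
    obtain ⟨P₀⟩ := (inferInstance : Nonempty (Sylow s A))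
    have h1 := Subgroup.card_mul_index (P₀ : Subgroup A)
    have hcardP : Nat.card (P₀ : Subgroup A) = s := by
      rw [P₀.card_eq_multiplicity, hfs, pow_one]
    rw [hcardP, hst] at h1
    have hidx : (P₀ : Subgroup A).index = t := Nat.eq_of_mul_eq_mul_left hs.pos h1
    rw [hsylcount s hs hfs]
    have := P₀.card_dvd_index
    rwa [hidx] at this
  rcases hcard with hA | hA
  · -- |A| = q * r
    have hfactq : (Nat.card A).factorization q = 1 := by
      rw [Nat.card_eq_fintype_card, hA, Nat.factorization_mul hq.ne_zero hr.ne_zero]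
      simp [hq.factorization, hr.factorization, Finsupp.single_apply, Ne.symm hqr]
    have hfactr : (Nat.card A).factorization r = 1 := by
      rw [Nat.card_eq_fintype_card, hA, Nat.factorization_mul hq.ne_zero hr.ne_zero]
      simp [hq.factorization, hr.factorization, Finsupp.single_apply, hqr]
    have hTq' : Tq = T.filter (fun C : Subgroup A => Nat.card C = q) := rfl
    have hTr' : Tr = T.filter (fun C : Subgroup A => Nat.card C = r) := by
      ext C
      rw [hTr, Finset.mem_filter, Finset.mem_filter]
      constructor
      · rintro ⟨h1, h2⟩
        exact ⟨h1, hTrr C (by rw [hTr, Finset.mem_filter]; exact ⟨h1, h2⟩)⟩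
      · rintro ⟨h1, h2⟩
        refine ⟨h1, ?_⟩
        rw [h2]
        exact Ne.symm hqr
    have hkq : Tq.card ∣ r := by
      rw [hTq']
      exact hsylindex q r hq (by rw [Nat.card_eq_fintype_card, hA]) hfactq
    have hkr : Tr.card ∣ q := by
      rw [hTr']
      exact hsylindex r q hr (by rw [Nat.card_eq_fintype_card, hA, mul_comm]) hfactr
    obtain ⟨m, hm⟩ : ∃ m, q = m + 2 := ⟨q - 2, by have := hq.two_le; omega⟩
    obtain ⟨n, hn⟩ : ∃ n, r = n + 2 := ⟨r - 2, by have := hr.two_le; omega⟩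
    have h1q : 1 ≤ q := hq.one_lt.le
    have h1r : 1 ≤ r := hr.one_lt.le
    have h1qr : 1 ≤ q * r := Nat.one_le_iff_ne_zero.mpr (by positivity)
    have hq2 : (2:ℤ) ≤ (q:ℤ) := by exact_mod_cast hq.two_le
    have hr2 : (2:ℤ) ≤ (r:ℤ) := by exact_mod_cast hr.two_le
    rcases hr.eq_one_or_self_of_dvd _ hkq with h1 | h1
    · rcases hq.eq_one_or_self_of_dvd _ hkr with h2 | h2
      · rw [hA, h1, h2] at hsumsplit
        zify [h1q, h1r, h1qr] at hsumsplit
        nlinarith [mul_pos (by linarith : (0:ℤ) < (q:ℤ)-1) (by linarith : (0:ℤ) < (r:ℤ)-1)]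
      · have hTk : T.card - 1 = q := by omega
        rw [hTk] at hpk
        exact hpq ((Nat.prime_dvd_prime_iff_eq hp hq).mp hpk)
    · rcases hq.eq_one_or_self_of_dvd _ hkr with h2 | h2
      · have hTk : T.card - 1 = r := by omega
        rw [hTk] at hpk
        exact hpr ((Nat.prime_dvd_prime_iff_eq hp hr).mp hpk)
      · rw [hA, h1, h2] at hsumsplit
        zify [h1q, h1r, h1qr] at hsumsplit
        nlinarith [mul_pos (by linarith : (0:ℤ) < (q:ℤ)-1) (by linarith : (0:ℤ) < (r:ℤ)-1)]
  · -- |A| = q * q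
    have hTr0 : Tr = ∅ := by
      rw [Finset.eq_empty_iff_forall_notMem]
      intro C hC
      have hcr := hTrr C hC
      have hdvd : Nat.card C ∣ Fintype.card A := by
        rw [← Nat.card_eq_fintype_card]; exact Subgroup.card_subgroup_dvd_card C
      rw [hcr, hA] at hdvd
      have hrq : r ∣ q := ((Nat.Prime.dvd_mul hr).mp hdvd).elim id id
      exact hqr (((Nat.prime_dvd_prime_iff_eq hr hq).mp hrq).symm)
    have hkr0 : Tr.card = 0 := by rw [hTr0]; rfl
    rw [hA, hkr0, zero_mul, add_zero] at hsumsplit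
    have h1q : 1 ≤ q := hq.one_lt.le
    have h1qq : 1 ≤ q * q := Nat.one_le_iff_ne_zero.mpr (by positivity)
    have heq : (q+1) * (q-1) = q*q - 1 := by
      zify [h1q, h1qq]; ring
    have hmul : Tq.card * (q-1) = (q+1) * (q-1) := by rw [← hsumsplit, heq]
    have hkq1 : Tq.card = q + 1 := Nat.eq_of_mul_eq_mul_right (by have := hq.two_le; omega) hmul
    have hTk : T.card - 1 = q := by omega
    rw [hTk] at hpk
    exact hpq ((Nat.prime_dvd_prime_iff_eq hp hq).mp hpk)

end F

section Helpers

lemma card_sup_le_of_normal {H : Type*} [Group H] (M Y : Subgroup H) [M.Normal] :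
    Nat.card ↥(M ⊔ Y) ≤ Nat.card M * Nat.card Y := by
  have h := Subgroup.normal_mul M Y
  have h2 : Nat.card ↥(M ⊔ Y) = Nat.card ((M : Set H) * (Y : Set H)) := by
    rw [← h]; rfl
  rw [h2]
  exact Set.natCard_mul_le

lemma pow_inv_eq {H : Type*} [Group H] [Finite H] (x : H) (i : ℕ) :
    (x ^ i)⁻¹ = x ^ (i * (orderOf x - 1)) := by
  have hn : 0 < orderOf x := orderOf_pos x
  symm
  rw [eq_inv_iff_mul_eq_one, ← pow_add]
  have : i * (orderOf x - 1) + i = orderOf x * i := by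
    cases' Nat.exists_eq_add_of_le hn with m hm
    rw [hm, Nat.add_sub_cancel_left]; ring
  rw [this, pow_mul, pow_orderOf_eq_one, one_pow]

lemma card_sup_zpowers_le {H : Type*} [Group H] [Finite H] (x y : H) (hcomm : x * y = y * x) :
    Nat.card ↥(Subgroup.zpowers x ⊔ Subgroup.zpowers y) ≤ orderOf x * orderOf y := by
  classical
  have hc : Commute x y := hcomm
  have hn : 0 < orderOf x := orderOf_pos x
  have hm : 0 < orderOf y := orderOf_pos y
  -- the subgroup of products of powers
  let P : Subgroup H :=
    { carrier := {z | ∃ i j : ℕ, z = x ^ i * y ^ j}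
      one_mem' := ⟨0, 0, by simp⟩
      mul_mem' := by
        rintro a b ⟨i, j, rfl⟩ ⟨k, l, rfl⟩
        refine ⟨i + k, j + l, ?_⟩
        have hcp : y ^ j * x ^ k = x ^ k * y ^ j := ((hc.symm).pow_pow j k).eq
        rw [pow_add, pow_add]
        calc x ^ i * y ^ j * (x ^ k * y ^ l)
            = x ^ i * (y ^ j * x ^ k) * y ^ l := by group
          _ = x ^ i * (x ^ k * y ^ j) * y ^ l := by rw [hcp]
          _ = x ^ i * x ^ k * (y ^ j * y ^ l) := by group
      inv_mem' := by
        rintro a ⟨i, j, rfl⟩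
        refine ⟨i * (orderOf x - 1), j * (orderOf y - 1), ?_⟩
        rw [mul_inv_rev, pow_inv_eq x i, pow_inv_eq y j]
        exact ((hc.pow_pow _ _).symm).eq }
  have hsub : Subgroup.zpowers x ⊔ Subgroup.zpowers y ≤ P := by
    apply sup_le
    · intro z hz
      obtain ⟨i, hi⟩ := mem_powers_iff_mem_zpowers.mpr hz
      exact ⟨i, 0, by rw [← hi]; simp⟩
    · intro z hz
      obtain ⟨j, hj⟩ := mem_powers_iff_mem_zpowers.mpr hz
      exact ⟨0, j, by rw [← hj]; simp⟩
  -- surjection from Fin n × Fin m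
  have hsurj : ∀ z ∈ Subgroup.zpowers x ⊔ Subgroup.zpowers y,
      ∃ p : Fin (orderOf x) × Fin (orderOf y), x ^ (p.1 : ℕ) * y ^ (p.2 : ℕ) = z := by
    intro z hz
    obtain ⟨i, j, rfl⟩ := hsub hz
    exact ⟨(⟨i % orderOf x, Nat.mod_lt i hn⟩, ⟨j % orderOf y, Nat.mod_lt j hm⟩), by
      simp only
      rw [pow_mod_orderOf, pow_mod_orderOf]⟩
  have hmem : ∀ p : Fin (orderOf x) × Fin (orderOf y),
      x ^ (p.1 : ℕ) * y ^ (p.2 : ℕ) ∈ Subgroup.zpowers x ⊔ Subgroup.zpowers y := by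
    intro p
    exact Subgroup.mul_mem _
      (Subgroup.mem_sup_left (Subgroup.pow_mem _ (Subgroup.mem_zpowers x) _))
      (Subgroup.mem_sup_right (Subgroup.pow_mem _ (Subgroup.mem_zpowers y) _))
  have : Nat.card ↥(Subgroup.zpowers x ⊔ Subgroup.zpowers y)
      ≤ Nat.card (Fin (orderOf x) × Fin (orderOf y)) := by
    apply Nat.card_le_card_of_surjective
      (fun p => (⟨x ^ (p.1 : ℕ) * y ^ (p.2 : ℕ), hmem p⟩ : ↥(Subgroup.zpowers x ⊔ Subgroup.zpowers y)))
    rintro ⟨z, hz⟩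
    obtain ⟨p, hp⟩ := hsurj z hz
    exact ⟨p, Subtype.ext hp⟩
  simpa using this

lemma exists_min_normal {H : Type*} [Group H] [Fintype H] [Group.IsSolvable H] (hnt : Nontrivial H) :
    ∃ (M : Subgroup H) (u : ℕ), M.Normal ∧ M ≠ ⊥ ∧ u.Prime ∧ (∀ x ∈ M, x ^ u = 1) ∧
      (∀ x ∈ M, ∀ y ∈ M, x * y = y * x) := by
  classical
  have hex : ∃ n, ∃ M : Subgroup H, M.Normal ∧ M ≠ ⊥ ∧ Nat.card M = n :=
    ⟨Nat.card (⊤ : Subgroup H), ⊤, inferInstance, by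
      intro h
      obtain ⟨a, b, hab⟩ := hnt
      exact hab (by
        have ha : a ∈ (⊥ : Subgroup H) := h ▸ Subgroup.mem_top a
        have hb : b ∈ (⊥ : Subgroup H) := h ▸ Subgroup.mem_top b
        rw [Subgroup.mem_bot] at ha hb
        rw [ha, hb]), rfl⟩
  obtain ⟨M, hMnorm, hMbot, hMcard⟩ := Nat.find_spec hex
  have hmin : ∀ K : Subgroup H, K.Normal → K ≠ ⊥ → Nat.find hex ≤ Nat.card K :=
    fun K h1 h2 => Nat.find_min' hex ⟨K, h1, h2, rfl⟩
  haveI := hMnorm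
  haveI : (⁅M, M⁆).Normal := Subgroup.commutator_normal M M
  have hcomm_le : ⁅M, M⁆ ≤ M := Subgroup.commutator_le_left M M
  by_cases hbot : ⁅M, M⁆ = ⊥
  · -- M abelian
    have habel : ∀ x ∈ M, ∀ y ∈ M, x * y = y * x := by
      intro x hx y hy
      have h := Subgroup.commutator_mem_commutator hx hy
      rw [hbot, Subgroup.mem_bot] at h
      exact (commutatorElement_eq_one_iff_commute.mp h).eq
    have hM1 : Nat.card M ≠ 1 := fun h => hMbot (Subgroup.card_eq_one.mp h)
    obtain ⟨u, hu, hudvd⟩ := Nat.exists_prime_and_dvd hM1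
    haveI := Fact.mk hu
    obtain ⟨z, hz⟩ := exists_prime_orderOf_dvd_card (G := ↥M) u
      (by rwa [← Nat.card_eq_fintype_card])
    -- u-torsion subgroup
    let T : Subgroup H :=
      { carrier := {w | w ∈ M ∧ w ^ u = 1}
        one_mem' := ⟨M.one_mem, one_pow u⟩
        mul_mem' := by
          rintro a b ⟨ha, ha'⟩ ⟨hb, hb'⟩
          refine ⟨M.mul_mem ha hb, ?_⟩
          have hcab : Commute a b := habel a ha b hb
          rw [hcab.mul_pow, ha', hb', one_mul]
        inv_mem' := by
          rintro a ⟨ha, ha'⟩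
          exact ⟨M.inv_mem ha, by rw [inv_pow, ha', inv_one]⟩ }
    have hTnorm : T.Normal := by
      constructor
      intro w hw g
      refine ⟨hMnorm.conj_mem w hw.1 g, ?_⟩
      rw [conj_pow, hw.2, mul_one, mul_inv_cancel]
    have hTle : T ≤ M := fun w hw => hw.1
    have hTbot : T ≠ ⊥ := by
      rw [Subgroup.ne_bot_iff_exists_ne_one]
      refine ⟨⟨(z : H), ⟨z.2, ?_⟩⟩, ?_⟩
      · have : z ^ u = 1 := by rw [← hz]; exact pow_orderOf_eq_one z
        have := congrArg (Subtype.val) this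
        simpa using this
      · intro hcon
        have hz1 : (z : H) = 1 := congrArg Subtype.val hcon
        have : z = 1 := Subtype.ext hz1
        rw [this] at hz
        simp at hz
        exact hu.ne_one hz.symm
    have hTM : T = M := by
      apply Subgroup.eq_of_le_of_card_ge hTle
      rw [hMcard]
      exact hmin T hTnorm hTbot
    refine ⟨M, u, hMnorm, hMbot, hu, ?_, habel⟩
    intro w hw
    rw [← hTM] at hw
    exact hw.2
  · -- perfect: contradiction with solvability
    exfalso
    have hMM : ⁅M, M⁆ = M := by
      apply Subgroup.eq_of_le_of_card_ge hcomm_le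
      rw [hMcard]
      exact hmin _ inferInstance hbot
    have hmap : ∀ k, (derivedSeries ↥M k).map M.subtype = M := by
      intro k
      induction k with
      | zero =>
        simp only [derivedSeries_zero]
        rw [← MonoidHom.range_eq_map, Subgroup.range_subtype]
      | succ k ih =>
        rw [derivedSeries_succ, Subgroup.map_commutator, ih, hMM]
    obtain ⟨k, hk⟩ := (inferInstance : Group.IsSolvable ↥M).solvable
    have := hmap k
    rw [hk, Subgroup.map_bot] at this
    exact hMbot this.symm

end Helpers

universe u

section LemD
variable (q r : ℕ)

lemma lemD (hq : q.Prime) (hr : r.Prime) (hqr : q ≠ r) :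
    ∀ (n : ℕ) (H : Type u) (_ : Group H) (_ : Fintype H), IsSolvable H → Fintype.card H ≤ n →
    q ∣ Fintype.card H → r ∣ Fintype.card H →
    ∃ A : Subgroup H, Nat.card A = q * r ∨ (Nat.card A = q * q ∧ ∀ a ∈ A, a ^ q = 1)
      ∨ (Nat.card A = r * r ∧ ∀ a ∈ A, a ^ r = 1) := by
  intro n
  induction n using Nat.strong_induction_on with
  | _ n IH =>
  intro H _ _ hsolv hn hqd hrd
  classical
  haveI : Group.IsSolvable H := hsolv
  haveI := Fact.mk hq
  haveI := Fact.mk hr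
  have hcardpos : 0 < Fintype.card H := Fintype.card_pos
  have hnt : Nontrivial H := Fintype.one_lt_card_iff_nontrivial.mp
    (lt_of_lt_of_le hq.one_lt (Nat.le_of_dvd hcardpos hqd))
  obtain ⟨M, u, hMnorm, hMbot, hu, hMexp, hMabel⟩ := exists_min_normal hnt
  haveI := hMnorm
  have hMprime : ∀ s : ℕ, s.Prime → s ∣ Nat.card M → s = u := by
    intro s hs hsd
    haveI := Fact.mk hs
    obtain ⟨z, hz⟩ := exists_prime_orderOf_dvd_card (G := ↥M) s
      (by rwa [← Nat.card_eq_fintype_card])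
    have hzu : (z : H) ^ u = 1 := hMexp _ z.2
    have hoz : orderOf (z : H) = s := by
      rw [← hz]; exact orderOf_injective M.subtype Subtype.coe_injective z
    have hdvd : s ∣ u := by rw [← hoz]; exact orderOf_dvd_of_pow_eq_one hzu
    exact (Nat.prime_dvd_prime_iff_eq hs hu).mp hdvd
  -- the "M is an s-group with s ∈ {q,r}" case, done generically:
  -- here for s = q with partner t = r (and we'll instantiate symmetrically)
  by_cases huq : u = q
  · subst huq
    obtain ⟨y, hy⟩ := exists_prime_orderOf_dvd_card (G := H) r hrd
    by_cases hcM : Nat.card M = u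
    · refine ⟨M ⊔ Subgroup.zpowers y, Or.inl ?_⟩
      have h1 : u ∣ Nat.card ↥(M ⊔ Subgroup.zpowers y) :=
        hcM ▸ Subgroup.card_dvd_of_le le_sup_left
      have h2 : r ∣ Nat.card ↥(M ⊔ Subgroup.zpowers y) := by
        have := Subgroup.card_dvd_of_le (le_sup_right : Subgroup.zpowers y ≤ M ⊔ Subgroup.zpowers y)
        rwa [Nat.card_zpowers, hy] at this
      have h3 : u * r ∣ Nat.card ↥(M ⊔ Subgroup.zpowers y) :=
        Nat.Coprime.mul_dvd_of_dvd_of_dvd ((Nat.coprime_primes hq hr).mpr hqr) h1 h2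
      have h4 : Nat.card ↥(M ⊔ Subgroup.zpowers y) ≤ u * r := by
        have := card_sup_le_of_normal M (Subgroup.zpowers y)
        rwa [hcM, Nat.card_zpowers, hy] at this
      exact le_antisymm h4 (Nat.le_of_dvd Nat.card_pos h3)
    · obtain ⟨x₀, hx₀⟩ := Subgroup.ne_bot_iff_exists_ne_one.mp hMbot
      have hxM : (x₀ : H) ∈ M := x₀.2
      have hx1 : (x₀ : H) ≠ 1 := fun h => hx₀ (Subtype.ext h)
      have hox : orderOf (x₀ : H) = u := orderOf_eq_prime (hMexp _ hxM) hx1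
      have hnotle : ¬ M ≤ Subgroup.zpowers (x₀ : H) := by
        intro hle
        exact hcM (by rw [le_antisymm hle (Subgroup.zpowers_le.mpr hxM), Nat.card_zpowers, hox])
      obtain ⟨y', hy'M, hy'n⟩ := SetLike.not_le_iff_exists.mp hnotle
      have hoy' : orderOf y' = u :=
        orderOf_eq_prime (hMexp _ hy'M) (fun h => hy'n (h ▸ (Subgroup.zpowers (x₀:H)).one_mem))
      have hAle : Subgroup.zpowers (x₀:H) ⊔ Subgroup.zpowers y' ≤ M :=
        sup_le (Subgroup.zpowers_le.mpr hxM) (Subgroup.zpowers_le.mpr hy'M)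
      have hexpA : ∀ a ∈ Subgroup.zpowers (x₀:H) ⊔ Subgroup.zpowers y', a ^ u = 1 :=
        fun a ha => hMexp a (hAle ha)
      have hpA : IsPGroup u ↥(Subgroup.zpowers (x₀:H) ⊔ Subgroup.zpowers y') := by
        intro a
        refine ⟨1, ?_⟩
        rw [pow_one]
        exact Subtype.ext (by
          have := hexpA (a : H) a.2
          simpa using this)
      obtain ⟨j, hj⟩ := IsPGroup.iff_card.mp hpA
      have hy'A : y' ∈ Subgroup.zpowers (x₀:H) ⊔ Subgroup.zpowers y' :=
        Subgroup.mem_sup_right (Subgroup.mem_zpowers y')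
      have hlt : u < Nat.card ↥(Subgroup.zpowers (x₀:H) ⊔ Subgroup.zpowers y') := by
        by_contra hnot
        push_neg at hnot
        have heq : Subgroup.zpowers (x₀:H) = Subgroup.zpowers (x₀:H) ⊔ Subgroup.zpowers y' :=
          Subgroup.eq_of_le_of_card_ge le_sup_left (by rwa [Nat.card_zpowers, hox])
        exact hy'n (heq ▸ hy'A)
      have hub : Nat.card ↥(Subgroup.zpowers (x₀:H) ⊔ Subgroup.zpowers y') ≤ u * u := by
        have := card_sup_zpowers_le (x₀:H) y' (hMabel _ hxM y' hy'M)
        rwa [hox, hoy'] at this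
      have hcardA : Nat.card ↥(Subgroup.zpowers (x₀:H) ⊔ Subgroup.zpowers y') = u * u := by
        rw [hj] at hlt hub ⊢
        have hle2 : j ≤ 2 := (Nat.pow_le_pow_iff_right hq.one_lt).mp (by rwa [pow_two])
        have hge1 : 1 < j := (Nat.pow_lt_pow_iff_right hq.one_lt).mp (by rwa [pow_one])
        have : j = 2 := by omega
        rw [this, pow_two]
      exact ⟨_, Or.inr (Or.inl ⟨hcardA, hexpA⟩)⟩
  · by_cases hur : u = r
    · subst hur
      obtain ⟨y, hy⟩ := exists_prime_orderOf_dvd_card (G := H) q hqd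
      by_cases hcM : Nat.card M = u
      · refine ⟨M ⊔ Subgroup.zpowers y, Or.inl ?_⟩
        have h1 : u ∣ Nat.card ↥(M ⊔ Subgroup.zpowers y) :=
          hcM ▸ Subgroup.card_dvd_of_le le_sup_left
        have h2 : q ∣ Nat.card ↥(M ⊔ Subgroup.zpowers y) := by
          have := Subgroup.card_dvd_of_le
            (le_sup_right : Subgroup.zpowers y ≤ M ⊔ Subgroup.zpowers y)
          rwa [Nat.card_zpowers, hy] at this
        have h3 : u * q ∣ Nat.card ↥(M ⊔ Subgroup.zpowers y) :=
          Nat.Coprime.mul_dvd_of_dvd_of_dvd ((Nat.coprime_primes hr hq).mpr (Ne.symm hqr)) h1 h2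
        have h4 : Nat.card ↥(M ⊔ Subgroup.zpowers y) ≤ u * q := by
          have := card_sup_le_of_normal M (Subgroup.zpowers y)
          rwa [hcM, Nat.card_zpowers, hy] at this
        rw [mul_comm q u]
        exact le_antisymm h4 (Nat.le_of_dvd Nat.card_pos h3)
      · obtain ⟨x₀, hx₀⟩ := Subgroup.ne_bot_iff_exists_ne_one.mp hMbot
        have hxM : (x₀ : H) ∈ M := x₀.2
        have hx1 : (x₀ : H) ≠ 1 := fun h => hx₀ (Subtype.ext h)
        have hox : orderOf (x₀ : H) = u := orderOf_eq_prime (hMexp _ hxM) hx1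
        have hnotle : ¬ M ≤ Subgroup.zpowers (x₀ : H) := by
          intro hle
          exact hcM (by rw [le_antisymm hle (Subgroup.zpowers_le.mpr hxM), Nat.card_zpowers, hox])
        obtain ⟨y', hy'M, hy'n⟩ := SetLike.not_le_iff_exists.mp hnotle
        have hoy' : orderOf y' = u :=
          orderOf_eq_prime (hMexp _ hy'M) (fun h => hy'n (h ▸ (Subgroup.zpowers (x₀:H)).one_mem))
        have hAle : Subgroup.zpowers (x₀:H) ⊔ Subgroup.zpowers y' ≤ M :=
          sup_le (Subgroup.zpowers_le.mpr hxM) (Subgroup.zpowers_le.mpr hy'M)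
        have hexpA : ∀ a ∈ Subgroup.zpowers (x₀:H) ⊔ Subgroup.zpowers y', a ^ u = 1 :=
          fun a ha => hMexp a (hAle ha)
        have hpA : IsPGroup u ↥(Subgroup.zpowers (x₀:H) ⊔ Subgroup.zpowers y') := by
          intro a
          refine ⟨1, ?_⟩
          rw [pow_one]
          exact Subtype.ext (by
            have := hexpA (a : H) a.2
            simpa using this)
        obtain ⟨j, hj⟩ := IsPGroup.iff_card.mp hpA
        have hy'A : y' ∈ Subgroup.zpowers (x₀:H) ⊔ Subgroup.zpowers y' :=
          Subgroup.mem_sup_right (Subgroup.mem_zpowers y')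
        have hlt : u < Nat.card ↥(Subgroup.zpowers (x₀:H) ⊔ Subgroup.zpowers y') := by
          by_contra hnot
          push_neg at hnot
          have heq : Subgroup.zpowers (x₀:H) = Subgroup.zpowers (x₀:H) ⊔ Subgroup.zpowers y' :=
            Subgroup.eq_of_le_of_card_ge le_sup_left (by rwa [Nat.card_zpowers, hox])
          exact hy'n (heq ▸ hy'A)
        have hub : Nat.card ↥(Subgroup.zpowers (x₀:H) ⊔ Subgroup.zpowers y') ≤ u * u := by
          have := card_sup_zpowers_le (x₀:H) y' (hMabel _ hxM y' hy'M)
          rwa [hox, hoy'] at this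
        have hcardA : Nat.card ↥(Subgroup.zpowers (x₀:H) ⊔ Subgroup.zpowers y') = u * u := by
          rw [hj] at hlt hub ⊢
          have hle2 : j ≤ 2 := (Nat.pow_le_pow_iff_right hr.one_lt).mp (by rwa [pow_two])
          have hge1 : 1 < j := (Nat.pow_lt_pow_iff_right hr.one_lt).mp (by rwa [pow_one])
          have : j = 2 := by omega
          rw [this, pow_two]
        exact ⟨_, Or.inr (Or.inr ⟨hcardA, hexpA⟩)⟩
    · -- u ∉ {q, r} : pass to the quotient, then Schur-Zassenhaus
      have hcardHQ : Fintype.card H = Nat.card (H ⧸ M) * Nat.card M := by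
        rw [← Nat.card_eq_fintype_card]
        exact Subgroup.card_eq_card_quotient_mul_card_subgroup M
      have hM1 : 1 < Nat.card M := by
        have h0 : Nat.card M ≠ 1 := fun h => hMbot (Subgroup.card_eq_one.mp h)
        have : 0 < Nat.card M := Nat.card_pos
        omega
      have hQpos : 0 < Nat.card (H ⧸ M) := Nat.card_pos
      have hQlt : Fintype.card (H ⧸ M) < Fintype.card H := by
        rw [← Nat.card_eq_fintype_card (α := H ⧸ M)]
        calc Nat.card (H ⧸ M) < Nat.card (H ⧸ M) * Nat.card M := by
              exact lt_mul_of_one_lt_right hQpos hM1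
          _ = Fintype.card H := hcardHQ.symm
      have hqQ : q ∣ Fintype.card (H ⧸ M) := by
        have h0 : q ∣ Nat.card (H ⧸ M) * Nat.card M := by rw [← hcardHQ]; exact hqd
        rcases (Nat.Prime.dvd_mul hq).mp h0 with h | h
        · rwa [Nat.card_eq_fintype_card] at h
        · exact absurd (hMprime q hq h).symm huq
      have hrQ : r ∣ Fintype.card (H ⧸ M) := by
        have h0 : r ∣ Nat.card (H ⧸ M) * Nat.card M := by rw [← hcardHQ]; exact hrd
        rcases (Nat.Prime.dvd_mul hr).mp h0 with h | h
        · rwa [Nat.card_eq_fintype_card] at h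
        · exact absurd (hMprime r hr h).symm hur
      obtain ⟨Abar, hAbar⟩ := IH (Fintype.card (H ⧸ M)) (lt_of_lt_of_le hQlt hn)
        (H ⧸ M) inferInstance inferInstance (inferInstance : Group.IsSolvable (H ⧸ M)) le_rfl hqQ hrQ
      -- pull back
      set π := QuotientGroup.mk' M with hπ
      have hπs : Function.Surjective π := QuotientGroup.mk'_surjective M
      set A₀ := Abar.comap π with hA₀
      have hMle : M ≤ A₀ := by
        intro m hm
        rw [hA₀, Subgroup.mem_comap]
        have h1 : π m = 1 := (QuotientGroup.eq_one_iff m).mpr hm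
        rw [h1]
        exact Abar.one_mem
      have hker : (π.comp A₀.subtype).ker = M.subgroupOf A₀ := by
        ext k
        rw [MonoidHom.mem_ker, Subgroup.mem_subgroupOf]
        exact QuotientGroup.eq_one_iff _
      have hrange : (π.comp A₀.subtype).range = Abar := by
        ext z
        constructor
        · rintro ⟨k, rfl⟩
          exact Subgroup.mem_comap.mp k.2
        · intro hz
          obtain ⟨w, rfl⟩ := hπs z
          exact ⟨⟨w, Subgroup.mem_comap.mpr hz⟩, rfl⟩
      have hsubOfcard : Nat.card (M.subgroupOf A₀) = Nat.card M :=
        Nat.card_congr (Subgroup.subgroupOfEquivOfLe hMle).toEquiv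
      have hcardA₀ : Nat.card ↥A₀ = Nat.card Abar * Nat.card M := by
        have h1 : Nat.card ↥A₀
            = Nat.card (↥A₀ ⧸ (π.comp A₀.subtype).ker) * Nat.card (π.comp A₀.subtype).ker :=
          Subgroup.card_eq_card_quotient_mul_card_subgroup _
        have h2 : Nat.card (↥A₀ ⧸ (π.comp A₀.subtype).ker) = Nat.card (π.comp A₀.subtype).range :=
          Nat.card_congr (QuotientGroup.quotientKerEquivRange _).toEquiv
        rw [h1, h2, hrange, hker, hsubOfcard]
      have hMpos : 0 < Nat.card M := Nat.card_pos
      have hidx : (M.subgroupOf A₀).index = Nat.card Abar := by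
        have h4 := Subgroup.card_mul_index (M.subgroupOf A₀)
        rw [hsubOfcard, hcardA₀] at h4
        have h5 : Nat.card M * (M.subgroupOf A₀).index = Nat.card M * Nat.card Abar := by
          rw [h4, mul_comm]
        exact Nat.eq_of_mul_eq_mul_left hMpos h5
      have hudvd : ∀ s : ℕ, s.Prime → s ∣ Nat.card M → s ∣ Nat.card Abar → False := by
        intro s hs hs1 hs2
        have hsu : s = u := hMprime s hs hs1
        subst hsu
        rcases hAbar with h | h | h
        · rw [h] at hs2
          rcases (Nat.Prime.dvd_mul hs).mp hs2 with h' | h'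
          · exact huq ((Nat.prime_dvd_prime_iff_eq hs hq).mp h')
          · exact hur ((Nat.prime_dvd_prime_iff_eq hs hr).mp h')
        · rw [h.1] at hs2
          rcases (Nat.Prime.dvd_mul hs).mp hs2 with h' | h' <;>
            exact huq ((Nat.prime_dvd_prime_iff_eq hs hq).mp h')
        · rw [h.1] at hs2
          rcases (Nat.Prime.dvd_mul hs).mp hs2 with h' | h' <;>
            exact hur ((Nat.prime_dvd_prime_iff_eq hs hr).mp h')
      have hcop : Nat.Coprime (Nat.card (M.subgroupOf A₀)) (M.subgroupOf A₀).index := by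
        rw [hsubOfcard, hidx]
        by_contra hnc
        obtain ⟨s, hs, hsd⟩ := Nat.exists_prime_and_dvd hnc
        exact hudvd s hs (hsd.trans (Nat.gcd_dvd_left _ _)) (hsd.trans (Nat.gcd_dvd_right _ _))
      obtain ⟨K, hK⟩ := Subgroup.exists_right_complement'_of_coprime hcop
      have hcardK : Nat.card K = Nat.card Abar := by
        have h5 := hK.card_mul
        rw [hsubOfcard, hcardA₀] at h5
        have h6 : Nat.card M * Nat.card K = Nat.card M * Nat.card Abar := by
          rw [h5, mul_comm]
        exact Nat.eq_of_mul_eq_mul_left hMpos h6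
      have hcardAfin : Nat.card (K.map A₀.subtype) = Nat.card Abar := by
        rw [← hcardK]
        exact (Nat.card_congr
          (Subgroup.equivMapOfInjective K A₀.subtype Subtype.coe_injective).toEquiv).symm
      have hexp_transfer : ∀ s : ℕ, (∀ b ∈ Abar, b ^ s = 1) →
          ∀ a ∈ K.map A₀.subtype, a ^ s = 1 := by
        intro s hAexp a ha
        obtain ⟨k, hkK, rfl⟩ := Subgroup.mem_map.mp ha
        have hπk : π (A₀.subtype k) ∈ Abar := Subgroup.mem_comap.mp k.2
        have h6 : π ((A₀.subtype k) ^ s) = 1 := by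
          rw [map_pow]
          exact hAexp _ hπk
        have h7 : (A₀.subtype k) ^ s ∈ M := (QuotientGroup.eq_one_iff _).mp h6
        have h8 : k ^ s ∈ M.subgroupOf A₀ := by
          rw [Subgroup.mem_subgroupOf]
          exact h7
        have h9 : k ^ s ∈ K := K.pow_mem hkK s
        have h10 : k ^ s = 1 := by
          have h11 := hK.disjoint.le_bot (Subgroup.mem_inf.mpr ⟨h8, h9⟩)
          rwa [Subgroup.mem_bot] at h11
        rw [← map_pow, h10, map_one]
      rcases hAbar with h | h | h
      · exact ⟨K.map A₀.subtype, Or.inl (hcardAfin.trans h)⟩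
      · exact ⟨K.map A₀.subtype, Or.inr (Or.inl ⟨hcardAfin.trans h.1, hexp_transfer q h.2⟩)⟩
      · exact ⟨K.map A₀.subtype, Or.inr (Or.inr ⟨hcardAfin.trans h.1, hexp_transfer r h.2⟩)⟩

end LemD

section Core

lemma dvd_prime_mul' {a b d : ℕ} (ha : a.Prime) (hb : b.Prime) (hab : a ≠ b) (h : d ∣ a * b) :
    d = 1 ∨ d = a ∨ d = b ∨ d = a * b := by
  by_cases had : a ∣ d
  · obtain ⟨e, rfl⟩ := had
    have he : e ∣ b := (mul_dvd_mul_iff_left ha.pos.ne').mp h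
    rcases (hb.eq_one_or_self_of_dvd e he) with h' | h'
    · subst h'; right; left; ring
    · subst h'; right; right; right; rfl
  · have hcop : Nat.Coprime a d := (Nat.Prime.coprime_iff_not_dvd ha).mpr had
    have hdb : d ∣ b := hcop.symm.dvd_of_dvd_mul_left h
    rcases hb.eq_one_or_self_of_dvd d hdb with h' | h'
    · exact Or.inl h'
    · exact Or.inr (Or.inr (Or.inl h'))

lemma order_lift {G : Type*} [Group G] [Fintype G] (M : Subgroup G) [M.Normal] (m : ℕ)
    (h : ∃ x : G ⧸ M, orderOf x = m) : ∃ g : G, orderOf g = m := by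
  obtain ⟨x, hx⟩ := h
  obtain ⟨g, rfl⟩ := QuotientGroup.mk'_surjective M x
  have hdvd : m ∣ orderOf g := by rw [← hx]; exact orderOf_map_dvd _ g
  have hog : 0 < orderOf g := orderOf_pos g
  refine ⟨g ^ (orderOf g / m), ?_⟩
  rw [orderOf_pow]
  rw [Nat.gcd_eq_right (Nat.div_dvd_of_dvd hdvd)]
  exact Nat.div_div_self hdvd hog.ne'

lemma lemCore {G : Type u} [Group G] [Fintype G] (hsolv : IsSolvable G)
    (t α β : ℕ) (ht : t.Prime) (hα : α.Prime) (hβ : β.Prime)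
    (htα : t ≠ α) (htβ : t ≠ β) (hαβ : α ≠ β)
    (hαd : α ∣ Fintype.card G) (hβd : β ∣ Fintype.card G)
    (N : Subgroup G) (hNnorm : N.Normal) (hNbot : N ≠ ⊥)
    (hNexp : ∀ v ∈ N, v ^ t = 1)
    (hNab : ∀ x ∈ N, ∀ y ∈ N, x * y = y * x)
    (htα' : ¬∃ g : G, orderOf g = t * α) (htβ' : ¬∃ g : G, orderOf g = t * β)
    (hαβ' : ¬∃ g : G, orderOf g = α * β) : False := by
  classical
  haveI := hNnorm
  haveI := Fact.mk ht
  haveI := Fact.mk hα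
  haveI := Fact.mk hβ
  obtain ⟨A, hA⟩ := lemD α β hα hβ hαβ (Fintype.card G) G _ _ hsolv le_rfl hαd hβd
  letI : CommGroup ↥N :=
    { (inferInstance : Group ↥N) with
      mul_comm := fun a b => Subtype.ext (hNab _ a.2 _ b.2) }
  let ρ : ↥A →* MulAut ↥N := MulAut.conjNormal.comp A.subtype
  have hNnt : ∃ v : ↥N, v ≠ 1 := Subgroup.ne_bot_iff_exists_ne_one.mp hNbot
  have hexp : ∀ v : ↥N, v ^ t = 1 := fun v => Subtype.ext (by
    have := hNexp _ v.2
    simpa using this)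
  have hordcoe : ∀ a : ↥A, orderOf a = orderOf (a : G) :=
    fun a => (orderOf_injective A.subtype Subtype.coe_injective a).symm
  -- freeness
  have hfree : ∀ a : ↥A, (orderOf (a : G) = α ∨ orderOf (a : G) = β) →
      ∀ v : ↥N, ρ a v = v → v = 1 := by
    intro a hoa v hv
    by_contra hv1
    have hvco : ((v : G) : G) ≠ 1 := fun h => hv1 (Subtype.ext h)
    have hordv : orderOf (v : G) = t := orderOf_eq_prime (hNexp _ v.2) hvco
    have hcomm : Commute (a : G) (v : G) := by
      have h1 : (a : G) * v * (a : G)⁻¹ = v := by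
        have := congrArg (Subtype.val) hv
        simpa [ρ] using this
      have := congrArg (· * (a : G)) h1
      exact (by simpa [mul_assoc] using this : (a : G) * (v : G) = (v : G) * (a : G))
    rcases hoa with h | h
    · apply htα'
      refine ⟨(a : G) * (v : G), ?_⟩
      rw [hcomm.orderOf_mul_eq_mul_orderOf_of_coprime, h, hordv, mul_comm]
      rw [h, hordv]
      exact (Nat.coprime_primes hα ht).mpr (Ne.symm htα)
    · apply htβ'
      refine ⟨(a : G) * (v : G), ?_⟩
      rw [hcomm.orderOf_mul_eq_mul_orderOf_of_coprime, h, hordv, mul_comm]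
      rw [h, hordv]
      exact (Nat.coprime_primes hβ ht).mpr (Ne.symm htβ)
  rcases hA with h | h | h
  · -- |A| = α * β
    have horder : ∀ a : ↥A, a ≠ 1 → orderOf (a : G) = α ∨ orderOf (a : G) = β := by
      intro a ha
      have h1 : orderOf a ∣ α * β := by rw [← h]; exact orderOf_dvd_natCard a
      rcases dvd_prime_mul' hα hβ hαβ h1 with h' | h' | h' | h'
      · exact absurd (orderOf_eq_one_iff.mp h') ha
      · left; rw [← hordcoe]; exact h'
      · right; rw [← hordcoe]; exact h'
      · exfalso
        apply hαβ'
        exact ⟨(a : G), by rw [← hordcoe]; exact h'⟩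
    exact lemF ρ ht hα hβ htα htβ hαβ hNnt hexp
      (fun a ha v => hfree a (horder a ha) v)
      (fun a ha => by rw [hordcoe] at *; exact horder a ha)
      (Or.inl (by rw [← Nat.card_eq_fintype_card]; exact h))
  · -- |A| = α * α
    have horder : ∀ a : ↥A, a ≠ 1 → orderOf (a : G) = α ∨ orderOf (a : G) = β := by
      intro a ha
      have h1 : (a : G) ^ α = 1 := h.2 _ a.2
      have h2 : orderOf (a : G) ∣ α := orderOf_dvd_of_pow_eq_one h1
      rcases hα.eq_one_or_self_of_dvd _ h2 with h' | h'
      · exact absurd (orderOf_eq_one_iff.mp (by rwa [hordcoe] at *)) ha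
      · exact Or.inl h'
    exact lemF ρ ht hα hβ htα htβ hαβ hNnt hexp
      (fun a ha v => hfree a (horder a ha) v)
      (fun a ha => by rw [hordcoe] at *; exact horder a ha)
      (Or.inr (by rw [← Nat.card_eq_fintype_card]; exact h.1))
  · -- |A| = β * β : use lemF with the roles of α and β exchanged
    have horder : ∀ a : ↥A, a ≠ 1 → orderOf (a : G) = β ∨ orderOf (a : G) = α := by
      intro a ha
      have h1 : (a : G) ^ β = 1 := h.2 _ a.2
      have h2 : orderOf (a : G) ∣ β := orderOf_dvd_of_pow_eq_one h1
      rcases hβ.eq_one_or_self_of_dvd _ h2 with h' | h'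
      · exact absurd (orderOf_eq_one_iff.mp (by rwa [hordcoe] at *)) ha
      · exact Or.inl h'
    exact lemF ρ ht hβ hα htβ htα (Ne.symm hαβ) hNnt hexp
      (fun a ha v => hfree a ((horder a ha).symm) v)
      (fun a ha => by rw [hordcoe] at *; exact horder a ha)
      (Or.inr (by rw [← Nat.card_eq_fintype_card]; exact h.1))

end Core

section Main

lemma mainAux : ∀ (n : ℕ) (G : Type u) (_ : Group G) (_ : Fintype G), IsSolvable G →
    Fintype.card G ≤ n → ∀ p q r : ℕ, p.Prime → q.Prime → r.Prime →
    p ≠ q → p ≠ r → q ≠ r →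
    p ∣ Fintype.card G → q ∣ Fintype.card G → r ∣ Fintype.card G →
    (¬∃ g : G, orderOf g = p * q) → (¬∃ g : G, orderOf g = p * r) →
    (¬∃ g : G, orderOf g = q * r) → False := by
  intro n
  induction n using Nat.strong_induction_on with
  | _ n IH =>
  intro G _ _ hsolv hn p q r hp hq hr hpq hpr hqr hpd hqd hrd h1 h2 h3
  classical
  haveI : Group.IsSolvable G := hsolv
  have hcardpos : 0 < Fintype.card G := Fintype.card_pos
  have hnt : Nontrivial G := Fintype.one_lt_card_iff_nontrivial.mp
    (lt_of_lt_of_le hp.one_lt (Nat.le_of_dvd hcardpos hpd))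
  obtain ⟨M, u, hMnorm, hMbot, hu, hMexp, hMabel⟩ := exists_min_normal hnt
  haveI := hMnorm
  by_cases hup : u = p
  · subst hup
    exact lemCore hsolv u q r hu hq hr hpq hpr hqr hqd hrd M hMnorm hMbot hMexp hMabel h1 h2 h3
  · by_cases huq : u = q
    · subst huq
      refine lemCore hsolv u p r hu hp hr (Ne.symm hpq) hqr hpr hpd hrd M hMnorm hMbot hMexp hMabel
        ?_ h3 h2
      rintro ⟨g, hg⟩
      exact h1 ⟨g, by rw [Nat.mul_comm] at hg; exact hg⟩
    · by_cases hur : u = r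
      · subst hur
        refine lemCore hsolv u p q hu hp hq (Ne.symm hpr) (Ne.symm hqr) hpq hpd hqd M hMnorm
          hMbot hMexp hMabel ?_ ?_ h1
        · rintro ⟨g, hg⟩
          exact h2 ⟨g, by rw [Nat.mul_comm] at hg; exact hg⟩
        · rintro ⟨g, hg⟩
          exact h3 ⟨g, by rw [Nat.mul_comm] at hg; exact hg⟩
      · -- pass to the quotient G ⧸ M
        have hMprime : ∀ s : ℕ, s.Prime → s ∣ Nat.card M → s = u := by
          intro s hs hsd
          haveI := Fact.mk hs
          obtain ⟨z, hz⟩ := exists_prime_orderOf_dvd_card (G := ↥M) s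
            (by rwa [← Nat.card_eq_fintype_card])
          have hzu : (z : G) ^ u = 1 := hMexp _ z.2
          have hoz : orderOf (z : G) = s := by
            rw [← hz]; exact orderOf_injective M.subtype Subtype.coe_injective z
          have hdvd : s ∣ u := by rw [← hoz]; exact orderOf_dvd_of_pow_eq_one hzu
          exact (Nat.prime_dvd_prime_iff_eq hs hu).mp hdvd
        have hcardHQ : Fintype.card G = Nat.card (G ⧸ M) * Nat.card M := by
          rw [← Nat.card_eq_fintype_card]
          exact Subgroup.card_eq_card_quotient_mul_card_subgroup M
        have hM1 : 1 < Nat.card M := by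
          have h0 : Nat.card M ≠ 1 := fun h => hMbot (Subgroup.card_eq_one.mp h)
          have : 0 < Nat.card M := Nat.card_pos
          omega
        have hQpos : 0 < Nat.card (G ⧸ M) := Nat.card_pos
        have hQlt : Fintype.card (G ⧸ M) < Fintype.card G := by
          rw [← Nat.card_eq_fintype_card (α := G ⧸ M)]
          calc Nat.card (G ⧸ M) < Nat.card (G ⧸ M) * Nat.card M :=
                lt_mul_of_one_lt_right hQpos hM1
            _ = Fintype.card G := hcardHQ.symm
        have hdivQ : ∀ s : ℕ, s.Prime → s ≠ u → s ∣ Fintype.card G → s ∣ Fintype.card (G ⧸ M) := by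
          intro s hs hsu hsd
          have h0 : s ∣ Nat.card (G ⧸ M) * Nat.card M := by rw [← hcardHQ]; exact hsd
          rcases (Nat.Prime.dvd_mul hs).mp h0 with h | h
          · rwa [Nat.card_eq_fintype_card] at h
          · exact absurd (hMprime s hs h) hsu
        refine IH (Fintype.card (G ⧸ M)) (lt_of_lt_of_le hQlt hn) (G ⧸ M) _ _ (inferInstance : Group.IsSolvable (G ⧸ M))
          le_rfl p q r hp hq hr hpq hpr hqr
          (hdivQ p hp (fun h => hup h.symm) hpd)
          (hdivQ q hq (fun h => huq h.symm) hqd)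
          (hdivQ r hr (fun h => hur h.symm) hrd)
          (fun hex => h1 (order_lift M _ hex))
          (fun hex => h2 (order_lift M _ hex))
          (fun hex => h3 (order_lift M _ hex))

end Main

/-- For a finite solvable group `G`, there do not exist three distinct primes `p`, `q`,
`r` dividing `|G|` such that `G` has no element of order `p*q`, none of order `p*r`, and
none of order `q*r`. -/
theorem stmt_12 {G : Type*} [Group G] [Fintype G] (hsolv : IsSolvable G)
    (p q r : ℕ) (hp : p.Prime) (hq : q.Prime) (hr : r.Prime)
    (hpq : p ≠ q) (hpr : p ≠ r) (hqr : q ≠ r)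
    (hpd : p ∣ Fintype.card G) (hqd : q ∣ Fintype.card G) (hrd : r ∣ Fintype.card G) :
    ¬((¬∃ g : G, orderOf g = p * q) ∧ (¬∃ g : G, orderOf g = p * r) ∧
      (¬∃ g : G, orderOf g = q * r)) := by
  rintro ⟨h1, h2, h3⟩
  exact mainAux (Fintype.card G) G _ _ hsolv le_rfl p q r hp hq hr hpq hpr hqr hpd hqd hrd h1 h2 h3
end

section
/- For an odd prime power q = p^n with q ≡ 1 (mod 4), the group PSL(2, q) contains elements of order p, (q-1)/2, and (q+1)/2. -/
open Matrix
open scoped MatrixGroups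

section aux

variable {F : Type*} [Field F]

private lemma center_sq (x : SpecialLinearGroup (Fin 2) F)
    (hx : x ∈ Subgroup.center (SpecialLinearGroup (Fin 2) F)) : x ^ 2 = 1 := by
  obtain ⟨r, hr, hrx⟩ := Matrix.SpecialLinearGroup.mem_center_iff.mp hx
  have : ((x ^ 2 : SpecialLinearGroup (Fin 2) F) : Matrix (Fin 2) (Fin 2) F)
      = ((1 : SpecialLinearGroup (Fin 2) F) : Matrix (Fin 2) (Fin 2) F) := by
    rw [Matrix.SpecialLinearGroup.coe_pow, ← hrx, ← map_pow]
    simp only [Fintype.card_fin] at hr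
    simp [hr]
  exact Subtype.ext this

private lemma neg_one_mem_center (x : SpecialLinearGroup (Fin 2) F)
    (hx : (x : Matrix (Fin 2) (Fin 2) F) = -1) :
    x ∈ Subgroup.center (SpecialLinearGroup (Fin 2) F) := by
  refine Matrix.SpecialLinearGroup.mem_center_iff.mpr ⟨-1, ?_, ?_⟩
  · simp [Fintype.card_fin]
  · rw [hx]
    ext i j
    fin_cases i <;> fin_cases j <;>
      simp [Matrix.scalar_apply, Matrix.diagonal_apply, Matrix.one_apply]

private lemma order_psl (g : SpecialLinearGroup (Fin 2) F) (m : ℕ)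
    (hord : orderOf g = 2 * m) (hc : g ^ m ∈ Subgroup.center (SpecialLinearGroup (Fin 2) F)) :
    orderOf (g : PSL(2, F)) = m := by
  have h1 : ((g : PSL(2, F)) : PSL(2, F)) ^ m = 1 := by
    rw [← QuotientGroup.mk_pow]
    exact (QuotientGroup.eq_one_iff _).mpr hc
  have hdvd : orderOf (g : PSL(2, F)) ∣ m := orderOf_dvd_of_pow_eq_one h1
  set d := orderOf (g : PSL(2, F)) with hd
  have h2 : g ^ d ∈ Subgroup.center (SpecialLinearGroup (Fin 2) F) := by
    rw [← QuotientGroup.eq_one_iff, QuotientGroup.mk_pow]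
    exact pow_orderOf_eq_one _
  have h3 : g ^ (2 * d) = 1 := by
    have := center_sq _ h2
    rw [← pow_mul, mul_comm] at this
    exact this
  have h4 : 2 * m ∣ 2 * d := hord ▸ orderOf_dvd_of_pow_eq_one h3
  exact Nat.dvd_antisymm hdvd ((mul_dvd_mul_iff_left (two_ne_zero)).mp h4)

end aux

/-- For an odd prime power `q = p^n` with `q ≡ 1 (mod 4)`, the projective special linear
group `PSL(2, q)` contains elements of order `p`, `(q-1)/2`, and `(q+1)/2`. -/
theorem stmt_19 (p n q : ℕ) (hp : p.Prime) (hodd : p ≠ 2) (hq : q = p ^ n)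
    (hq4 : q % 4 = 1) (F : Type*) [Field F] [Fintype F] (hF : Fintype.card F = q) :
    (∃ g : PSL(2, F), orderOf g = p) ∧
      (∃ g : PSL(2, F), orderOf g = (q - 1) / 2) ∧
        ∃ g : PSL(2, F), orderOf g = (q + 1) / 2 := by
  have hq2 : 2 ≤ q := hF ▸ Fintype.one_lt_card
  have hq5 : 5 ≤ q := by omega
  haveI := Classical.decEq F
  have hFq : Fintype.card Fˣ = q - 1 := by rw [Fintype.card_units, hF]
  -- characteristic
  have hcharp : CharP F p := by
    have hc := ringChar.charP F
    have hcp : (ringChar F).Prime := CharP.char_is_prime F _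
    obtain ⟨m, _, hcard⟩ := FiniteField.card F (ringChar F)
    have hdvd : ringChar F ∣ p ^ n := by
      rw [← hq, ← hF, hcard]
      exact dvd_pow_self _ m.2.ne'
    have : ringChar F = p :=
      (Nat.prime_dvd_prime_iff_eq hcp hp).mp (Nat.Prime.dvd_of_dvd_pow hcp hdvd)
    rwa [this] at hc
  haveI := Fact.mk hp
  have hp0 : (p : F) = 0 := CharP.cast_eq_zero F p
  constructor
  · -- order p : unipotent
    set u : SpecialLinearGroup (Fin 2) F :=
      ⟨!![1, 1; 0, 1], by simp [Matrix.det_fin_two_of]⟩ with hu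
    have hupow : ∀ k : ℕ, ((u : Matrix (Fin 2) (Fin 2) F)) ^ k = !![1, (k : F); 0, 1] := by
      intro k
      induction k with
      | zero => simp [Matrix.one_fin_two]
      | succ k ih =>
        rw [pow_succ, ih, hu]
        push_cast
        simp [Matrix.mul_fin_two, add_comm]
    have hup : u ^ p = 1 := by
      apply Subtype.ext
      rw [Matrix.SpecialLinearGroup.coe_pow, hupow p, hp0]
      simp [Matrix.one_fin_two]
    refine ⟨(u : PSL(2, F)), orderOf_eq_prime ?_ ?_⟩
    · rw [← QuotientGroup.mk_pow, hup]; rfl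
    · intro h
      have hmem := (QuotientGroup.eq_one_iff _).mp h
      obtain ⟨r, _, hr⟩ := Matrix.SpecialLinearGroup.mem_center_iff.mp hmem
      have := congrArg (fun M : Matrix (Fin 2) (Fin 2) F => M 0 1) hr
      simp [hu] at this
  constructor
  · -- order (q-1)/2 : diagonal
    obtain ⟨a, ha⟩ := IsCyclic.exists_generator (α := Fˣ)
    have haord : orderOf a = q - 1 := by
      rw [orderOf_eq_card_of_forall_mem_zpowers ha, Nat.card_eq_fintype_card, hFq]
    set d : SpecialLinearGroup (Fin 2) F :=
      ⟨!![(a : F), 0; 0, ((a⁻¹ : Fˣ) : F)], by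
        simp [Matrix.det_fin_two_of]⟩ with hd
    have hdpow : ∀ k : ℕ, ((d : Matrix (Fin 2) (Fin 2) F)) ^ k
        = !![((a ^ k : Fˣ) : F), 0; 0, (((a ^ k : Fˣ)⁻¹ : Fˣ) : F)] := by
      intro k
      induction k with
      | zero => simp [Matrix.one_fin_two]
      | succ k ih =>
        rw [pow_succ, ih, hd]
        push_cast
        simp [Matrix.mul_fin_two, pow_succ, mul_comm]
    have hdord : orderOf d = q - 1 := by
      rw [← haord]
      rw [orderOf_eq_orderOf_iff]
      intro k
      constructor
      · intro hk
        have := congrArg (fun M : SpecialLinearGroup (Fin 2) F =>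
          (M : Matrix (Fin 2) (Fin 2) F) 0 0) hk
        simp only [Matrix.SpecialLinearGroup.coe_pow, hdpow k] at this
        have h00 : ((a ^ k : Fˣ) : F) = 1 := by simpa using this
        exact Units.ext h00
      · intro hk
        apply Subtype.ext
        rw [Matrix.SpecialLinearGroup.coe_pow, hdpow k, hk]
        simp [Matrix.one_fin_two]
    set m := (q - 1) / 2 with hm
    have hm2 : q - 1 = 2 * m := by omega
    have hmpos : 0 < m := by omega
    have hmlt : m < q - 1 := by omega
    -- a^m = -1
    have hx2 : ((a ^ m : Fˣ) : F) * ((a ^ m : Fˣ) : F) = 1 := by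
      have : a ^ m * a ^ m = 1 := by
        rw [← pow_add, ← two_mul, ← hm2, ← haord, pow_orderOf_eq_one]
      have := congrArg (Units.val) this
      push_cast at this
      simpa using this
    have hx1 : ((a ^ m : Fˣ) : F) ≠ 1 := by
      intro h
      have : a ^ m = 1 := Units.ext (by simpa using h)
      have := orderOf_dvd_of_pow_eq_one this
      rw [haord] at this
      exact absurd (Nat.le_of_dvd hmpos this) (by omega)
    have hxneg : ((a ^ m : Fˣ) : F) = -1 :=
      (mul_self_eq_one_iff.mp hx2).resolve_left hx1
    have hxinv : (((a ^ m : Fˣ)⁻¹ : Fˣ) : F) = -1 := by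
      have : ((a ^ m : Fˣ) : F) * (((a ^ m : Fˣ)⁻¹ : Fˣ) : F) = 1 := by
        have := congrArg Units.val (mul_inv_cancel (a ^ m))
        push_cast at this
        simpa using this
      rw [hxneg] at this
      linear_combination -this
    refine ⟨(d : PSL(2, F)), ?_⟩
    apply order_psl
    · rw [hdord, hm2]
    · apply neg_one_mem_center
      rw [Matrix.SpecialLinearGroup.coe_pow, hdpow m, hxneg, hxinv]
      ext i j
      fin_cases i <;> fin_cases j <;>
        simp [Matrix.one_apply]
  · -- order (q+1)/2
    obtain ⟨c, hc⟩ := FiniteField.exists_nonsquare (F := F) (by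
      intro h
      exact hodd ((CharP.eq F (ringChar.charP F) hcharp).symm.trans h))
    have hf_irr : Irreducible (Polynomial.X ^ 2 - Polynomial.C c) := by
      apply X_pow_sub_C_irreducible_of_prime Nat.prime_two
      intro b hb
      exact hc ⟨b, by rw [← hb]; ring⟩
    haveI := Fact.mk hf_irr
    set f : Polynomial F := Polynomial.X ^ 2 - Polynomial.C c with hfdef
    have hf0 : f ≠ 0 := hf_irr.ne_zero
    set K := AdjoinRoot f with hK
    let pb : PowerBasis F K := AdjoinRoot.powerBasis hf0
    have hdim : pb.dim = 2 := by
      show f.natDegree = 2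
      rw [hfdef]
      exact Polynomial.natDegree_X_pow_sub_C
    haveI : Module.Finite F K := Module.Finite.of_basis pb.basis
    haveI : Finite K := Module.finite_of_finite F
    haveI : Fintype K := Fintype.ofFinite K
    let b : Module.Basis (Fin 2) F K := pb.basis.reindex (finCongr hdim)
    have hcardK : Fintype.card K = q ^ 2 := by
      rw [Module.card_fintype b, hF, Fintype.card_fin]
    haveI := Classical.decEq K
    have hcardKu : Fintype.card Kˣ = q ^ 2 - 1 := by
      rw [Fintype.card_units, hcardK]
    obtain ⟨g, hg⟩ := IsCyclic.exists_generator (α := Kˣ)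
    have hgord : orderOf g = (q - 1) * (q + 1) := by
      rw [orderOf_eq_card_of_forall_mem_zpowers hg, Nat.card_eq_fintype_card, hcardKu]
      obtain ⟨t, rfl⟩ : ∃ t, q = t + 1 := ⟨q - 1, by omega⟩
      rw [show (t + 1) ^ 2 = t * (t + 2) + 1 from by ring]
      simp
    set u : Kˣ := g ^ (q - 1) with hu
    have huord : orderOf u = q + 1 := by
      rw [hu, orderOf_pow, hgord, Nat.gcd_eq_right ⟨q + 1, by ring⟩,
        Nat.mul_div_cancel_left _ (by omega : 0 < q - 1)]
    -- the matrix
    let A := Algebra.leftMulMatrix b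
    have hAinj : Function.Injective A := by
      have : Function.Injective (A : K →+* Matrix (Fin 2) (Fin 2) F) :=
        RingHom.injective _
      exact this
    have hnorm : Algebra.norm F ((u : Kˣ) : K) = 1 := by
      rw [hu]
      push_cast
      rw [map_pow]
      have hne : Algebra.norm F ((g : Kˣ) : K) ≠ 0 :=
        Algebra.norm_ne_zero_iff.mpr (Units.ne_zero g)
      have := FiniteField.pow_card_sub_one_eq_one _ hne
      rwa [hF] at this
    set M : SpecialLinearGroup (Fin 2) F :=
      ⟨A ((u : Kˣ) : K), by rw [← Algebra.norm_eq_matrix_det b]; exact hnorm⟩ with hM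
    have hMpow : ∀ k : ℕ, ((M ^ k : SpecialLinearGroup (Fin 2) F) : Matrix (Fin 2) (Fin 2) F)
        = A (((u ^ k : Kˣ) : K)) := by
      intro k
      rw [Matrix.SpecialLinearGroup.coe_pow, hM]
      push_cast
      rw [map_pow]
    have hMord : orderOf M = q + 1 := by
      rw [← huord, orderOf_eq_orderOf_iff]
      intro k
      constructor
      · intro hk
        have h1 : A (((u ^ k : Kˣ) : K)) = A 1 := by
          rw [← hMpow k, hk, _root_.map_one]
          rfl
        have h2 := hAinj h1
        exact Units.ext (by simpa using h2)
      · intro hk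
        apply Subtype.ext
        rw [hMpow k, hk]
        simp
    set m := (q + 1) / 2 with hm
    have hm2 : q + 1 = 2 * m := by omega
    have hmpos : 0 < m := by omega
    have hmlt : m < q + 1 := by omega
    have hx2 : (((u ^ m : Kˣ) : K)) * (((u ^ m : Kˣ) : K)) = 1 := by
      have : u ^ m * u ^ m = 1 := by
        rw [← pow_add, ← two_mul, ← hm2, ← huord, pow_orderOf_eq_one]
      have := congrArg Units.val this
      push_cast at this
      simpa using this
    have hx1 : (((u ^ m : Kˣ) : K)) ≠ 1 := by
      intro h
      have : u ^ m = 1 := Units.ext (by simpa using h)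
      have := orderOf_dvd_of_pow_eq_one this
      rw [huord] at this
      exact absurd (Nat.le_of_dvd hmpos this) (by omega)
    have hxneg : (((u ^ m : Kˣ) : K)) = -1 :=
      (mul_self_eq_one_iff.mp hx2).resolve_left hx1
    refine ⟨(M : PSL(2, F)), ?_⟩
    apply order_psl
    · rw [hMord, hm2]
    · apply neg_one_mem_center
      rw [hMpow m, hxneg]
      simp
end
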